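/- arXiv:1204.2384 — 9 statements merged into one kernel-verified Lean document; each statement's English description precedes it below -/
import Mathlib

section
/- Let M be a left cancellative monoid generated by a finite set A, and suppose M admits a finite presentation ⟨A | R⟩. Let n = max{|u| + |v| : (u = v) ∈ R}. Then for any two parallel directed paths p and q in the right Cayley graph Γ of M over A (i.e., paths with the same start vertex and the same end vertex), the words labelling p and q represent the same element of M, and consequently p and q are homotopic in the directed 2-complex K_n(Γ) whose 2-cells are pairs of parallel paths of total length at most n. -/
/-- The element of the monoid `M` represented by the word `w` over the alphabet `A`,
where `f : A → M` interprets the letters. -/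
def wordProd {A M : Type*} [Monoid M] (f : A → M) (w : List A) : M := (w.map f).prod

/-- One application of a defining relation from `R`: replace a factor `s` by `t`
where `(s, t) ∈ R` or `(t, s) ∈ R`. -/
def OneStep {A : Type*} (R : Set (List A × List A)) (w w' : List A) : Prop :=
  ∃ u s t v : List A, ((s, t) ∈ R ∨ (t, s) ∈ R) ∧ w = u ++ s ++ v ∧ w' = u ++ t ++ v

/-- `⟨A | R⟩` (via `f : A → M`) is a presentation of `M`: `f` generates `M` (every element
is represented by a word) and two words represent the same element of `M` exactly when
they are related by the congruence generated by `R`. -/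
def Presents {A M : Type*} [Monoid M] (f : A → M) (R : Set (List A × List A)) : Prop :=
  Function.Surjective (wordProd f) ∧
    ∀ u v : List A, Relation.ReflTransGen (OneStep R) u v ↔ wordProd f u = wordProd f v

/-- An atomic homotopy in the directed 2-complex `K_n` of the right Cayley graph of `M`
over `A`: a path in the Cayley graph starting at `x` and labelled `u ++ s ++ v` is replaced
by the path labelled `u ++ t ++ v`, where the subpaths labelled `s` and `t` starting at the
vertex `x * (u)` are parallel (same endpoints) and `|s| + |t| ≤ n`, i.e. they form a
2-cell of `K_n`. -/
def KStep {A M : Type*} [Monoid M] (f : A → M) (n : ℕ) (p q : M × List A) : Prop :=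
  ∃ (x : M) (u s t v : List A),
    p = (x, u ++ s ++ v) ∧ q = (x, u ++ t ++ v) ∧
    x * wordProd f u * wordProd f s = x * wordProd f u * wordProd f t ∧
    s.length + t.length ≤ n

/-- Two paths in the right Cayley graph (given as a start vertex together with a label
word over `A`) are homotopic in `K_n` if one can be transformed into the other by a finite
sequence of 2-cell replacements. -/
def Homotopic {A M : Type*} [Monoid M] (f : A → M) (n : ℕ) :
    M × List A → M × List A → Prop :=
  Relation.ReflTransGen (KStep f n)

/-- The right Cayley graph of `M` over `A` is `n`-quasi-simply-connected: every pair of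
parallel paths (same start vertex `x`, same end vertex) is homotopic in `K_n`. -/
def NQSC {A M : Type*} [Monoid M] (f : A → M) (n : ℕ) : Prop :=
  ∀ (x : M) (w₁ w₂ : List A), x * wordProd f w₁ = x * wordProd f w₂ →
    Homotopic f n (x, w₁) (x, w₂)

/-- Let `M` be a left cancellative monoid generated by a finite set `A` (via `f : A → M`)
with a finite presentation `⟨A | R⟩`, and let `n = max {|u| + |v| : (u = v) ∈ R}`. Then any
two parallel paths in the right Cayley graph have labels representing the same element of
`M`, and are homotopic in `K_n`. -/
theorem stmt_6 {A M : Type} [Fintype A] [Monoid M]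
    (hcancel : ∀ x a b : M, x * a = x * b → a = b)
    (f : A → M) (R : Finset (List A × List A))
    (hpres : Presents f (↑R : Set (List A × List A))) :
    ∀ (x : M) (w₁ w₂ : List A), x * wordProd f w₁ = x * wordProd f w₂ →
      wordProd f w₁ = wordProd f w₂ ∧
      Homotopic f (R.sup fun p => p.1.length + p.2.length) (x, w₁) (x, w₂) := by

  intro x w₁ w₂ hx
  have heq : wordProd f w₁ = wordProd f w₂ := hcancel x _ _ hx
  refine ⟨heq, ?_⟩
  have hrel : Relation.ReflTransGen (OneStep (↑R : Set (List A × List A))) w₁ w₂ :=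
    (hpres.2 w₁ w₂).mpr heq
  have key : ∀ w w', OneStep (↑R : Set (List A × List A)) w w' →
      KStep f (R.sup fun p => p.1.length + p.2.length) (x, w) (x, w') := by
    intro w w' ⟨u, s, t, v, hst, hw, hw'⟩
    have hmem : (s, t) ∈ R ∨ (t, s) ∈ R := by simpa using hst
    have hstprod : wordProd f s = wordProd f t := by
      apply (hpres.2 s t).mp
      exact Relation.ReflTransGen.single ⟨[], s, t, [], hst, by simp, by simp⟩
    have hlen : s.length + t.length ≤ R.sup fun p => p.1.length + p.2.length := by
      rcases hmem with h | h
      · exact Finset.le_sup (f := fun p => p.1.length + p.2.length) h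
      · have := Finset.le_sup (f := fun p => p.1.length + p.2.length) h
        simp only [] at this
        omega
    exact ⟨x, u, s, t, v, by rw [hw], by rw [hw'], by rw [hstprod], hlen⟩
  exact Relation.ReflTransGen.lift' (fun w => (x, w)) (fun a b h => Relation.ReflTransGen.single (key a b h)) _ _ hrel
end

section
/- Let M be a left cancellative monoid generated by a finite set A, and suppose that the right Cayley graph Γ of M over A is n-quasi-simply-connected for some n ∈ ℕ. Then M is finitely presented; specifically, M is presented by ⟨A | R⟩ where R is the (finite) set of all relations u = v over A which hold in M and satisfy |u| + |v| ≤ n. -/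
/-- Let `M` be a left cancellative monoid generated by a finite set `A` (via `f : A → M`),
and suppose the right Cayley graph is `n`-quasi-simply-connected. Then the set `R` of all
relations `u = v` over `A` holding in `M` with `|u| + |v| ≤ n` is finite, and `⟨A | R⟩` is
a presentation of `M`; in particular `M` is finitely presented. -/
theorem stmt_7 {A M : Type} [Fintype A] [Monoid M]
    (hcancel : ∀ x a b : M, x * a = x * b → a = b)
    (f : A → M) (hgen : Function.Surjective (wordProd f))
    (n : ℕ) (hqsc : NQSC f n) :
    {p : List A × List A | wordProd f p.1 = wordProd f p.2 ∧
        p.1.length + p.2.length ≤ n}.Finite ∧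
    Presents f {p : List A × List A | wordProd f p.1 = wordProd f p.2 ∧
        p.1.length + p.2.length ≤ n} := by
  set R : Set (List A × List A) :=
    {p : List A × List A | wordProd f p.1 = wordProd f p.2 ∧
        p.1.length + p.2.length ≤ n} with hR
  have hwp : ∀ a b : List A, wordProd f (a ++ b) = wordProd f a * wordProd f b := by
    intro a b; simp [wordProd]
  constructor
  · apply Set.Finite.subset ((List.finite_length_le A n).prod (List.finite_length_le A n))
    rintro ⟨u, v⟩ ⟨_, hlen⟩
    exact ⟨le_trans (Nat.le_add_right _ _) hlen, le_trans (Nat.le_add_left _ _) hlen⟩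
  · refine ⟨hgen, fun u v => ⟨?_, ?_⟩⟩
    · intro h
      induction h with
      | refl => rfl
      | tail _ hstep ih =>
        obtain ⟨a, s, t, b, hst, rfl, rfl⟩ := hstep
        have hst' : wordProd f s = wordProd f t := by
          rcases hst with h' | h'
          · exact h'.1
          · exact h'.1.symm
        rw [ih, hwp, hwp, hwp, hwp, hst']
    · intro h
      have hstep : ∀ p q : M × List A, KStep f n p q →
          p.1 = q.1 ∧ Relation.ReflTransGen (OneStep R) p.2 q.2 := by
        rintro p q ⟨x, a, s, t, b, rfl, rfl, heq, hlen⟩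
        refine ⟨rfl, Relation.ReflTransGen.single ?_⟩
        refine ⟨a, s, t, b, Or.inl ⟨?_, hlen⟩, rfl, rfl⟩
        exact hcancel (x * wordProd f a) _ _ heq
      have key : ∀ p q : M × List A, Homotopic f n p q →
          Relation.ReflTransGen (OneStep R) p.2 q.2 := by
        intro p q hpq
        induction hpq with
        | refl => exact Relation.ReflTransGen.refl
        | tail _ hs ih => exact ih.trans (hstep _ _ hs).2
      exact key (1, u) (1, v) (hqsc 1 u v (by simpa using h))
end

section
/- A left cancellative monoid M generated by a finite set A is finitely presentable if and only if its right Cayley graph over A is quasi-simply-connected (i.e., n-quasi-simply-connected for some n ∈ ℕ). -/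
lemma wordProd_append {A M : Type*} [Monoid M] (f : A → M) (u v : List A) :
    wordProd f (u ++ v) = wordProd f u * wordProd f v := by
  simp [wordProd]


/-- A left cancellative monoid `M` generated by a finite set `A` (via `f : A → M`) is
finitely presentable (over `A`) if and only if its right Cayley graph over `A` is
`n`-quasi-simply-connected for some `n ∈ ℕ`. -/
theorem stmt_8 {A M : Type} [Fintype A] [Monoid M]
    (hcancel : ∀ x a b : M, x * a = x * b → a = b)
    (f : A → M) (hgen : Function.Surjective (wordProd f)) :
    (∃ R : Set (List A × List A), R.Finite ∧ Presents f R) ↔ ∃ n : ℕ, NQSC f n := by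
  constructor
  · rintro ⟨R, hRfin, hsurj, hpres⟩
    obtain ⟨n, hn⟩ := (hRfin.image (fun p => p.1.length + p.2.length)).bddAbove
    refine ⟨n, fun x w₁ w₂ hx => ?_⟩
    have h : wordProd f w₁ = wordProd f w₂ := hcancel x _ _ hx
    have key : ∀ s t : List A, (s, t) ∈ R → wordProd f s = wordProd f t := by
      intro s t hst
      exact (hpres s t).mp (Relation.ReflTransGen.single
        ⟨[], s, t, [], Or.inl hst, by simp, by simp⟩)
    have hstep : ∀ w w', OneStep R w w' → KStep f n (x, w) (x, w') := by
      rintro w w' ⟨u, s, t, v, hst, rfl, rfl⟩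
      refine ⟨x, u, s, t, v, rfl, rfl, ?_, ?_⟩
      · rcases hst with h' | h'
        · rw [key s t h']
        · rw [key t s h']
      · rcases hst with h' | h'
        · exact hn ⟨(s, t), h', rfl⟩
        · have := hn ⟨(t, s), h', rfl⟩
          simp only [Set.mem_image] at this ⊢
          omega
    have lift : ∀ w w', Relation.ReflTransGen (OneStep R) w w' →
        Homotopic f n (x, w) (x, w') := by
      intro w w' hr
      induction hr with
      | refl => exact Relation.ReflTransGen.refl
      | tail _ hs ih => exact ih.tail (hstep _ _ hs)
    exact lift _ _ ((hpres w₁ w₂).mpr h)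
  · rintro ⟨n, hq⟩
    refine ⟨{p | wordProd f p.1 = wordProd f p.2 ∧ p.1.length + p.2.length ≤ n},
      ?_, hgen, ?_⟩
    · apply Set.Finite.subset
        (Set.Finite.prod (List.finite_length_le A n) (List.finite_length_le A n))
      rintro ⟨s, t⟩ ⟨_, hlen⟩
      simp only [Set.mem_setOf_eq] at hlen
      constructor <;> simp only [Set.mem_setOf_eq] <;> omega
    · intro u v
      constructor
      · intro h
        induction h with
        | refl => rfl
        | tail _ hs ih =>
          obtain ⟨a, s, t, b, hst, rfl, rfl⟩ := hs
          have hst' : wordProd f s = wordProd f t := by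
            rcases hst with h' | h'
            · exact h'.1
            · exact h'.1.symm
          rw [ih]
          simp [wordProd_append, hst']
      · intro h
        have hhom := hq 1 u v (by simpa using h)
        have proj : ∀ p q : M × List A, Homotopic f n p q →
            Relation.ReflTransGen
              (OneStep {p : List A × List A |
                wordProd f p.1 = wordProd f p.2 ∧ p.1.length + p.2.length ≤ n})
              p.2 q.2 := by
          intro p q hpq
          induction hpq with
          | refl => exact Relation.ReflTransGen.refl
          | tail _ hs ih =>
            obtain ⟨x, a, s, t, b, rfl, rfl, heq, hlen⟩ := hs
            exact ih.tail ⟨a, s, t, b, Or.inl ⟨hcancel _ _ _ heq, hlen⟩, rfl, rfl⟩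
        exact proj _ _ hhom
end

section
/- The property of being quasi-simply-connected is inherited by strongly connected components: if Γ is an n-quasi-simply-connected directed graph and Δ is a strongly connected component of Γ, then Δ is n-quasi-simply-connected. -/
/-- A (directed) path in the directed graph with adjacency relation `adj`, recorded as its
nonempty list of vertices, consecutive ones being adjacent. -/
def IsDipath {V : Type*} (adj : V → V → Prop) (p : List V) : Prop :=
  p ≠ [] ∧ p.Chain' adj

/-- An atomic homotopy in the directed 2-complex `K_n(Γ)`: replace an occurrence of a
directed subpath `s` by a parallel directed subpath `t` (same first and last vertex),
where the total number of edges `(|s| - 1) + (|t| - 1)` of the 2-cell `(s, t)` is at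
most `n`, the result again being a directed path. -/
def GStep {V : Type*} (adj : V → V → Prop) (n : ℕ) (p q : List V) : Prop :=
  ∃ u s t v : List V, p = u ++ s ++ v ∧ q = u ++ t ++ v ∧
    IsDipath adj s ∧ IsDipath adj t ∧
    s.head? = t.head? ∧ s.getLast? = t.getLast? ∧
    (s.length - 1) + (t.length - 1) ≤ n ∧
    IsDipath adj p ∧ IsDipath adj q

/-- A directed graph is `n`-quasi-simply-connected if every pair of parallel directed
paths (same start vertex and same end vertex) is homotopic in `K_n`, i.e. connected by a
finite sequence of 2-cell replacements. -/
def GraphNQSC {V : Type*} (adj : V → V → Prop) (n : ℕ) : Prop :=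
  ∀ p q : List V, IsDipath adj p → IsDipath adj q →
    p.head? = q.head? → p.getLast? = q.getLast? →
    Relation.ReflTransGen (GStep adj n) p q

/-- The strongly connected component of the vertex `w`: all vertices with directed paths
to and from `w`. -/
def SCC {V : Type*} (adj : V → V → Prop) (w : V) : Set V :=
  {v | Relation.ReflTransGen adj v w ∧ Relation.ReflTransGen adj w v}


private lemma chain_reach {V : Type*} {adj : V → V → Prop} :
    ∀ (l : List V) (x : V), List.Chain adj x l → ∀ y ∈ l, Relation.ReflTransGen adj x y := by
  intro l
  induction l with
  | nil => intro x _ y hy; simp at hy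
  | cons b l ih =>
    intro x hc y hy
    rcases List.chain_cons.1 hc with ⟨hxb, hbl⟩
    rcases List.mem_cons.1 hy with rfl | hy
    · exact Relation.ReflTransGen.single hxb
    · exact (Relation.ReflTransGen.single hxb).trans (ih b hbl y hy)

private lemma chain_reach_last {V : Type*} {adj : V → V → Prop} :
    ∀ (l : List V) (x : V), List.Chain adj x l → ∀ y ∈ x :: l,
      Relation.ReflTransGen adj y ((x :: l).getLast (List.cons_ne_nil _ _)) := by
  intro l
  induction l with
  | nil =>
    intro x _ y hy
    simp only [List.mem_singleton] at hy
    subst hy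
    have : ([y].getLast (List.cons_ne_nil _ _)) = y := rfl
    rw [this]
  | cons b l ih =>
    intro x hc y hy
    rcases List.chain_cons.1 hc with ⟨hxb, hbl⟩
    have hlast : (x :: b :: l).getLast (List.cons_ne_nil _ _)
        = (b :: l).getLast (List.cons_ne_nil _ _) := by
      simp [List.getLast_cons]
    rw [hlast]
    rcases List.mem_cons.1 hy with rfl | hy
    · exact (Relation.ReflTransGen.single hxb).trans (ih b hbl b List.mem_cons_self)
    · exact ih b hbl y hy

private lemma step_mem {V : Type*} {adj : V → V → Prop} {n : ℕ} {w : V} {P Q : List V}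
    (hP : ∀ x ∈ P, x ∈ SCC adj w) (hstep : GStep adj n P Q) : ∀ x ∈ Q, x ∈ SCC adj w := by
  obtain ⟨u, s, t, v, rfl, rfl, hs, ht, hhead, hlast, -, -, -⟩ := hstep
  intro y hy
  simp only [List.mem_append] at hy
  rcases hy with (hyu | hyt) | hyv
  · exact hP y (by simp [hyu])
  · -- y ∈ t
    obtain ⟨a, t₀, rfl⟩ := List.exists_cons_of_ne_nil ht.1
    obtain ⟨a₀, s₀, rfl⟩ := List.exists_cons_of_ne_nil hs.1
    simp only [List.head?_cons, Option.some.injEq] at hhead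
    subst hhead
    have ha : a₀ ∈ SCC adj w := hP a₀ (by simp)
    have hb : ((a₀ :: t₀).getLast (List.cons_ne_nil _ _)) ∈ SCC adj w := by
      have h1 : (a₀ :: s₀).getLast? = some ((a₀ :: s₀).getLast (List.cons_ne_nil _ _)) :=
        List.getLast?_eq_getLast _
      have h2 : (a₀ :: t₀).getLast? = some ((a₀ :: t₀).getLast (List.cons_ne_nil _ _)) :=
        List.getLast?_eq_getLast _
      rw [h1, h2] at hlast
      have := Option.some.inj hlast
      rw [← this]
      have hm := List.getLast_mem (List.cons_ne_nil a₀ s₀)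
      exact hP _ (by simp only [List.mem_append, List.mem_cons]; simp only [List.mem_cons] at hm; tauto)
    have hchain : List.Chain adj a₀ t₀ := ht.2
    have h1 : Relation.ReflTransGen adj a₀ y := by
      rcases List.mem_cons.1 hyt with rfl | hy'
      · exact Relation.ReflTransGen.refl
      · exact chain_reach t₀ a₀ hchain y hy'
    have h2 : Relation.ReflTransGen adj y ((a₀ :: t₀).getLast (List.cons_ne_nil _ _)) :=
      chain_reach_last t₀ a₀ hchain y hyt
    exact ⟨h2.trans hb.1, ha.2.trans h1⟩
  · exact hP y (by simp [hyv])

private lemma step_lift {V : Type*} {adj : V → V → Prop} {n : ℕ} {w : V}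
    {p q : List (SCC adj w)} (hstep : GStep adj n (p.map Subtype.val) (q.map Subtype.val)) :
    GStep (fun a b : SCC adj w => adj a b) n p q := by
  obtain ⟨u, s, t, v, hp, hq, hs, ht, hhead, hlast, hlen, hP, hQ⟩ := hstep
  rw [List.append_assoc, List.map_eq_append_iff] at hp hq
  obtain ⟨u', sv', hpu, hu, hsv⟩ := hp
  obtain ⟨u'', tv', hqu, hu', htv⟩ := hq
  rw [List.map_eq_append_iff] at hsv htv
  obtain ⟨s', v', hsv', hs', hv'⟩ := hsv
  obtain ⟨t', v'', htv', ht', hv''⟩ := htv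
  have hinj : Function.Injective (Subtype.val : SCC adj w → V) := Subtype.val_injective
  have huu : u'' = u' := List.map_injective_iff.2 hinj (hu'.trans hu.symm)
  have hvv : v'' = v' := List.map_injective_iff.2 hinj (hv''.trans hv'.symm)
  subst huu hvv hsv' htv'
  refine ⟨u'', s', t', v'', by rw [hpu, List.append_assoc], by rw [hqu, List.append_assoc],
    ?_, ?_, ?_, ?_, ?_, ?_, ?_⟩
  · exact ⟨fun hn => hs.1 (by rw [← hs', hn]; rfl),
      (List.isChain_map _).1 (by rw [hs']; exact hs.2)⟩
  · exact ⟨fun hn => ht.1 (by rw [← ht', hn]; rfl),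
      (List.isChain_map _).1 (by rw [ht']; exact ht.2)⟩
  · have : (s'.map Subtype.val).head? = (t'.map Subtype.val).head? := by rw [hs', ht', hhead]
    simp only [List.head?_map] at this
    exact Option.map_injective hinj this
  · have : (s'.map Subtype.val).getLast? = (t'.map Subtype.val).getLast? := by
      rw [hs', ht', hlast]
    simp only [List.getLast?_map] at this
    exact Option.map_injective hinj this
  · have h1 : s'.length = s.length := by rw [← hs', List.length_map]
    have h2 : t'.length = t.length := by rw [← ht', List.length_map]
    rw [h1, h2]; exact hlen
  · exact ⟨fun hn => hP.1 (List.map_eq_nil_iff.2 hn), (List.isChain_map _).1 hP.2⟩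
  · exact ⟨fun hn => hQ.1 (List.map_eq_nil_iff.2 hn), (List.isChain_map _).1 hQ.2⟩

/-- Quasi-simple-connectedness is inherited by strongly connected components: if `Γ` is an
`n`-quasi-simply-connected directed graph and `Δ` is (the induced subgraph on) a strongly
connected component of `Γ`, then `Δ` is `n`-quasi-simply-connected. -/
theorem stmt_9 {V : Type*} (adj : V → V → Prop) (n : ℕ) (h : GraphNQSC adj n) (w : V) :
    GraphNQSC (fun a b : SCC adj w => adj a b) n := by
  intro p q hp hq hh hl
  have hinj : Function.Injective (Subtype.val : SCC adj w → V) := Subtype.val_injective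
  have memRTG : ∀ P Q : List V, Relation.ReflTransGen (GStep adj n) P Q →
      (∀ x ∈ P, x ∈ SCC adj w) → ∀ x ∈ Q, x ∈ SCC adj w := by
    intro P Q hPQ
    induction hPQ with
    | refl => exact fun hm => hm
    | tail _ hstep ih => exact fun hm => step_mem (ih hm) hstep
  have key : ∀ (p' : List (SCC adj w)) (Q : List V),
      Relation.ReflTransGen (GStep adj n) (p'.map Subtype.val) Q →
      ∀ q' : List (SCC adj w), Q = q'.map Subtype.val →
      Relation.ReflTransGen (GStep (fun a b : SCC adj w => adj a b) n) p' q' := by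
    intro p' Q hPQ
    induction hPQ with
    | refl =>
      intro q' hq'
      rw [List.map_injective_iff.2 hinj hq'.symm]
    | @tail A B hPA hstep ih =>
      intro q' hq'
      have hmemA : ∀ x ∈ A, x ∈ SCC adj w := by
        refine memRTG _ _ hPA ?_
        intro x hx
        obtain ⟨a, _, rfl⟩ := List.mem_map.1 hx
        exact a.2
      set a' : List (SCC adj w) := A.pmap (fun x hx => (⟨x, hx⟩ : SCC adj w)) hmemA with ha'def
      have hA : A = a'.map Subtype.val := by
        rw [ha'def, List.map_pmap]
        simp
      refine (ih a' hA).tail ?_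
      exact step_lift (by rw [← hA, ← hq']; exact hstep)
  apply key p (q.map Subtype.val) _ q rfl
  refine h _ _ ⟨fun hn => hp.1 (List.map_eq_nil_iff.1 hn), (List.isChain_map _).2 hp.2⟩
    ⟨fun hn => hq.1 (List.map_eq_nil_iff.1 hn), (List.isChain_map _).2 hq.2⟩ ?_ ?_
  · simp only [List.head?_map, hh]
  · simp only [List.getLast?_map, hl]
end

section
/- Let S be a monoid and H an H-class of S. Let Stab(H) = {s ∈ S : sH = H} be the left stabilizer of H, and define σ on Stab(H) by (x,y) ∈ σ iff xh = yh for all h ∈ H. Then Stab(H) is a submonoid of S, σ is a congruence on Stab(H), and the quotient Stab(H)/σ is a group. -/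
/-- Green's relation `L` on a semigroup: `a L b` iff `a = b` or there are `c, d` with
`a = c * b` and `b = d * a`. -/
def GreenL {S : Type*} [Semigroup S] (a b : S) : Prop :=
  a = b ∨ ∃ c d : S, a = c * b ∧ b = d * a

/-- Green's relation `R` on a semigroup: `a R b` iff `a = b` or there are `c, d` with
`a = b * c` and `b = a * d`. -/
def GreenR {S : Type*} [Semigroup S] (a b : S) : Prop :=
  a = b ∨ ∃ c d : S, a = b * c ∧ b = a * d

/-- Green's relation `H = L ∩ R`. -/
def GreenH {S : Type*} [Semigroup S] (a b : S) : Prop :=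
  GreenL a b ∧ GreenR a b

/-- The `H`-class of the element `h₀`. -/
def HClass {S : Type*} [Monoid S] (h₀ : S) : Set S := {x | GreenH x h₀}

/-- The left stabilizer `Stab(H) = {s : sH = H}` of the `H`-class of `h₀`. -/
def LStab {S : Type*} [Monoid S] (h₀ : S) : Set S :=
  {s | (fun h => s * h) '' HClass h₀ = HClass h₀}

/-- The Schützenberger congruence `σ` on `Stab(H)`: `x σ y` iff `x h = y h` for all
`h ∈ H`. -/
def SchutzRel {S : Type*} [Monoid S] (h₀ : S) (x y : S) : Prop :=
  ∀ h ∈ HClass h₀, x * h = y * h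

lemma h0_mem {S : Type*} [Monoid S] (h₀ : S) : h₀ ∈ HClass h₀ :=
  ⟨Or.inl rfl, Or.inl rfl⟩

lemma mem_imp {S : Type*} [Monoid S] {h₀ : S} {x : S} (hx : x ∈ LStab h₀)
    {h : S} (hh : h ∈ HClass h₀) : x * h ∈ HClass h₀ := by
  have : x * h ∈ (fun h => x * h) '' HClass h₀ := ⟨h, hh, rfl⟩
  rwa [hx] at this

lemma mem_pre {S : Type*} [Monoid S] {h₀ : S} {x : S} (hx : x ∈ LStab h₀)
    {h : S} (hh : h ∈ HClass h₀) : ∃ h' ∈ HClass h₀, x * h' = h := by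
  have : h ∈ (fun h => x * h) '' HClass h₀ := by rw [hx]; exact hh
  obtain ⟨h', hh', he⟩ := this
  exact ⟨h', hh', he⟩

/-- every element of the H-class is `h₀ * u` for some `u`. -/
lemma h_eq {S : Type*} [Monoid S] {h₀ h : S} (hh : h ∈ HClass h₀) :
    ∃ u : S, h = h₀ * u := by
  rcases hh.2 with h | ⟨c, d, hc, hd⟩
  · exact ⟨1, by simp [h]⟩
  · exact ⟨c, hc⟩

/-- Let `H` be an `H`-class of a monoid `S`. Then the left stabilizer `Stab(H)` is a
submonoid of `S`; `σ` is a congruence on `Stab(H)` (an equivalence relation compatible with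
multiplication); and the quotient `Stab(H)/σ` is a group: the class of `1` is an identity
and every class has an inverse. -/
theorem stmt_11 {S : Type*} [Monoid S] (h₀ : S) :
    (1 ∈ LStab h₀) ∧
    (∀ x ∈ LStab h₀, ∀ y ∈ LStab h₀, x * y ∈ LStab h₀) ∧
    (∀ x : S, SchutzRel h₀ x x) ∧
    (∀ x y : S, SchutzRel h₀ x y → SchutzRel h₀ y x) ∧
    (∀ x y z : S, SchutzRel h₀ x y → SchutzRel h₀ y z → SchutzRel h₀ x z) ∧
    (∀ x ∈ LStab h₀, ∀ x' ∈ LStab h₀, ∀ y ∈ LStab h₀, ∀ y' ∈ LStab h₀,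
      SchutzRel h₀ x x' → SchutzRel h₀ y y' → SchutzRel h₀ (x * y) (x' * y')) ∧
    (∀ x ∈ LStab h₀, ∃ y ∈ LStab h₀, SchutzRel h₀ (x * y) 1 ∧ SchutzRel h₀ (y * x) 1) := by
  refine ⟨?_, ?_, ?_, ?_, ?_, ?_, ?_⟩
  · simp [LStab]
  · intro x hx y hy
    show (fun h => (x * y) * h) '' HClass h₀ = HClass h₀
    ext h
    constructor
    · rintro ⟨h', hh', rfl⟩
      have := mem_imp hx (mem_imp hy hh')
      simpa [mul_assoc] using this
    · intro hh
      obtain ⟨h1, hh1, he1⟩ := mem_pre hx hh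
      obtain ⟨h2, hh2, he2⟩ := mem_pre hy hh1
      exact ⟨h2, hh2, by simp [← he1, ← he2, mul_assoc]⟩
  · intro x h _; rfl
  · intro x y hxy h hh; exact (hxy h hh).symm
  · intro x y z hxy hyz h hh; exact (hxy h hh).trans (hyz h hh)
  · intro x _ x' _ y _ y' hy' hxx' hyy' h hh
    have h1 : y * h = y' * h := hyy' h hh
    have h2 : y' * h ∈ HClass h₀ := mem_imp hy' hh
    calc x * y * h = x * (y' * h) := by rw [mul_assoc, h1]
      _ = x' * (y' * h) := hxx' _ h2
      _ = x' * y' * h := by rw [mul_assoc]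
  · intro x hx
    -- find q with q * (x * h₀) = h₀
    have hxh₀ : x * h₀ ∈ HClass h₀ := mem_imp hx (h0_mem h₀)
    obtain ⟨q, hq⟩ : ∃ q : S, q * (x * h₀) = h₀ := by
      rcases hxh₀.1 with h | ⟨c, d, hc, hd⟩
      · exact ⟨1, by rw [h]; simp⟩
      · exact ⟨d, hd.symm⟩
    -- qx acts as identity on H
    have qx_id : ∀ h ∈ HClass h₀, q * (x * h) = h := by
      intro h hh
      obtain ⟨u, hu⟩ := h_eq hh
      rw [hu, ← mul_assoc, ← mul_assoc, mul_assoc q x h₀, hq]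
    -- xq acts as identity on H
    have xq_id : ∀ h ∈ HClass h₀, x * (q * h) = h := by
      intro h hh
      obtain ⟨h', hh', he⟩ := mem_pre hx hh
      rw [← he, qx_id h' hh']
    have hqStab : q ∈ LStab h₀ := by
      show (fun h => q * h) '' HClass h₀ = HClass h₀
      ext h
      constructor
      · rintro ⟨h', hh', rfl⟩
        obtain ⟨h2, hh2, he2⟩ := mem_pre hx hh'
        have : q * (x * h2) ∈ HClass h₀ := by rw [qx_id h2 hh2]; exact hh2
        show q * h' ∈ HClass h₀
        rwa [← he2]
      · intro hh
        refine ⟨x * h, mem_imp hx hh, qx_id h hh⟩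
    refine ⟨q, hqStab, ?_, ?_⟩
    · intro h hh
      rw [one_mul, mul_assoc, xq_id h hh]
    · intro h hh
      rw [one_mul, mul_assoc, qx_id h hh]
end

section
/- Let X ⊆ ℕ and let M(X) be the monoid presented by ⟨a,b,c,d,e | a bⁱ c = a bⁱ d (i ∈ X), a bʲ c = a bʲ e (j ∉ X)⟩. Then the rewriting system with rules a bⁱ c → a bⁱ d for i ∈ X and a bʲ c → a bʲ e for j ∉ X is terminating and confluent, and the set N = A* \ ⋃_{i∈ℕ} A* a bⁱ c A* (words over A = {a,b,c,d,e} containing no factor a bⁱ c) is a set of unique normal forms for the elements of M(X). -/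
/-! The monoids `M(X)`. The alphabet `{a, b, c, d, e}` is modelled by `Fin 5`, with
`a = 0`, `b = 1`, `c = 2`, `d = 3`, `e = 4`. -/

/-- The word `a bⁱ c`. -/
def wABC (i : ℕ) : List (Fin 5) := 0 :: (List.replicate i 1 ++ [2])

/-- The word `a bⁱ d`. -/
def wABD (i : ℕ) : List (Fin 5) := 0 :: (List.replicate i 1 ++ [3])

/-- The word `a bⁱ e`. -/
def wABE (i : ℕ) : List (Fin 5) := 0 :: (List.replicate i 1 ++ [4])

/-- The defining relations of `M(X)`:
`a bⁱ c = a bⁱ d` for `i ∈ X` and `a bʲ c = a bʲ e` for `j ∉ X`. -/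
def MXRel (X : Set ℕ) : Set (List (Fin 5) × List (Fin 5)) :=
  {p | ∃ i : ℕ, (i ∈ X ∧ p = (wABC i, wABD i)) ∨ (i ∉ X ∧ p = (wABC i, wABE i))}

/-- One step of the rewriting system for `M(X)`:
`a bⁱ c → a bⁱ d` for `i ∈ X`, and `a bʲ c → a bʲ e` for `j ∉ X`. -/
def RWStep (X : Set ℕ) (w w' : List (Fin 5)) : Prop :=
  ∃ (u v : List (Fin 5)) (i : ℕ),
    (i ∈ X ∧ w = u ++ wABC i ++ v ∧ w' = u ++ wABD i ++ v) ∨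
    (i ∉ X ∧ w = u ++ wABC i ++ v ∧ w' = u ++ wABE i ++ v)

/-- The normal forms: words over `{a,b,c,d,e}` containing no factor `a bⁱ c`. -/
def MXNormal (w : List (Fin 5)) : Prop :=
  ¬∃ (u v : List (Fin 5)) (i : ℕ), w = u ++ wABC i ++ v

namespace MXAux

def sc (s : Option ℕ) (x : Fin 5) : Option ℕ :=
  if x = 0 then some 0 else if x = 1 then s.map (· + 1) else none

open Classical in
noncomputable def outF (X : Set ℕ) (s : Option ℕ) (x : Fin 5) : Fin 5 :=
  if x = 2 then
    match s with
    | some i => if i ∈ X then 3 else 4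
    | none => 2
  else x

noncomputable def phi (X : Set ℕ) : Option ℕ → List (Fin 5) → List (Fin 5)
  | _, [] => []
  | s, x :: t => outF X s x :: phi X (sc s x) t

variable {X : Set ℕ}

@[simp] lemma sc_zero (s : Option ℕ) : sc s 0 = some 0 := by simp [sc]
@[simp] lemma sc_one (s : Option ℕ) : sc s 1 = s.map (· + 1) := by simp [sc]
@[simp] lemma sc_two (s : Option ℕ) : sc s 2 = none := by simp [sc]
@[simp] lemma sc_three (s : Option ℕ) : sc s 3 = none := by simp [sc]
@[simp] lemma sc_four (s : Option ℕ) : sc s 4 = none := by simp [sc]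
@[simp] lemma outF_zero (s : Option ℕ) : outF X s 0 = 0 := by simp [outF]
@[simp] lemma outF_one (s : Option ℕ) : outF X s 1 = 1 := by simp [outF]
@[simp] lemma outF_three (s : Option ℕ) : outF X s 3 = 3 := by simp [outF]
@[simp] lemma outF_four (s : Option ℕ) : outF X s 4 = 4 := by simp [outF]
open Classical in
@[simp] lemma outF_two_some (i : ℕ) : outF X (some i) 2 = if i ∈ X then 3 else 4 := by
  simp [outF]
@[simp] lemma outF_two_none : outF X none 2 = 2 := by simp [outF]

@[simp] lemma phi_nil (s : Option ℕ) : phi X s [] = [] := rfl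
@[simp] lemma phi_cons (s : Option ℕ) (x : Fin 5) (t : List (Fin 5)) :
    phi X s (x :: t) = outF X s x :: phi X (sc s x) t := rfl

lemma phi_append (s : Option ℕ) (u v : List (Fin 5)) :
    phi X s (u ++ v) = phi X s u ++ phi X (u.foldl sc s) v := by
  induction u generalizing s with
  | nil => simp
  | cons x t ih => simp [ih]

lemma phi_rep (j k : ℕ) (r : List (Fin 5)) :
    phi X (some j) (List.replicate k 1 ++ r) =
      List.replicate k 1 ++ phi X (some (j + k)) r := by
  induction k generalizing j with
  | zero => simp
  | succ k ih =>
    rw [List.replicate_succ]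
    simp only [List.cons_append, phi_cons, outF_one, sc_one, Option.map_some]
    have h1 : j + 1 + k = j + (k + 1) := by omega
    rw [ih (j + 1), h1]

open Classical in
lemma phi_wABC (s : Option ℕ) (i : ℕ) (v : List (Fin 5)) :
    phi X s (wABC i ++ v) = (if i ∈ X then wABD i else wABE i) ++ phi X none v := by
  have : wABC i ++ v = 0 :: (List.replicate i 1 ++ (2 :: v)) := by simp [wABC]
  rw [this]
  rw [phi_cons, outF_zero, sc_zero, phi_rep]
  simp only [Nat.zero_add, phi_cons, outF_two_some, sc_two]
  split <;> simp [wABD, wABE]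

lemma phi_wABD (s : Option ℕ) (i : ℕ) (v : List (Fin 5)) :
    phi X s (wABD i ++ v) = wABD i ++ phi X none v := by
  have : wABD i ++ v = 0 :: (List.replicate i 1 ++ (3 :: v)) := by simp [wABD]
  rw [this, phi_cons, outF_zero, sc_zero, phi_rep]
  simp [wABD]

lemma phi_wABE (s : Option ℕ) (i : ℕ) (v : List (Fin 5)) :
    phi X s (wABE i ++ v) = wABE i ++ phi X none v := by
  have : wABE i ++ v = 0 :: (List.replicate i 1 ++ (4 :: v)) := by simp [wABE]
  rw [this, phi_cons, outF_zero, sc_zero, phi_rep]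
  simp [wABE]

lemma phi_step {w w' : List (Fin 5)} (h : RWStep X w w') :
    phi X none w = phi X none w' := by
  obtain ⟨u, v, i, h | h⟩ := h
  · obtain ⟨hi, rfl, rfl⟩ := h
    rw [List.append_assoc, List.append_assoc,
      phi_append none u (wABC i ++ v), phi_append none u (wABD i ++ v),
      phi_wABC, phi_wABD, if_pos hi]
  · obtain ⟨hi, rfl, rfl⟩ := h
    rw [List.append_assoc, List.append_assoc,
      phi_append none u (wABC i ++ v), phi_append none u (wABE i ++ v),
      phi_wABC, phi_wABE, if_neg hi]

lemma rw_count {w w' : List (Fin 5)} (h : RWStep X w w') :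
    List.count 2 w' < List.count 2 w := by
  obtain ⟨u, v, i, ⟨hi, rfl, rfl⟩ | ⟨hi, rfl, rfl⟩⟩ := h <;>
    simp [wABC, wABD, wABE, List.count_append, List.count_cons, List.count_replicate]

lemma fin5_cases : ∀ x : Fin 5, x = 0 ∨ x = 1 ∨ x = 2 ∨ x = 3 ∨ x = 4 := by decide

lemma normal_tail {x : Fin 5} {t : List (Fin 5)} (h : MXNormal (x :: t)) : MXNormal t := by
  rintro ⟨u, v, i, rfl⟩
  exact h ⟨x :: u, v, i, by simp⟩

lemma normal_cons {x : Fin 5} {L : List (Fin 5)} (h1 : MXNormal L)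
    (h2 : x = 0 → ∀ k r, L ≠ List.replicate k 1 ++ 2 :: r) : MXNormal (x :: L) := by
  rintro ⟨u, v, i, he⟩
  cases u with
  | nil =>
    rw [List.nil_append, wABC, List.cons_append, List.cons.injEq] at he
    refine h2 he.1 i v ?_
    rw [he.2]; simp
  | cons y u' =>
    rw [List.cons_append, List.cons_append] at he
    injection he with ha hb
    exact h1 ⟨u', v, i, by rw [hb, List.append_assoc]⟩

lemma cons_ne_rep2 {x : Fin 5} {L : List (Fin 5)} (h0 : x ≠ 2)
    (h1 : x = 1 → ∀ k r, L ≠ List.replicate k 1 ++ 2 :: r) :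
    ∀ k r, x :: L ≠ List.replicate k 1 ++ 2 :: r := by
  intro k r he
  cases k with
  | zero =>
    rw [List.replicate_zero, List.nil_append] at he
    injection he with ha _
    exact h0 ha
  | succ k =>
    rw [List.replicate_succ, List.cons_append] at he
    injection he with ha hb
    exact h1 ha k r hb

lemma phi_id : ∀ (w : List (Fin 5)) (s : Option ℕ), MXNormal w →
    (∀ j, s = some j → ∀ k r, w ≠ List.replicate k 1 ++ 2 :: r) → phi X s w = w := by
  intro w
  induction w with
  | nil => intro s _ _; rfl
  | cons x t ih =>
    intro s h1 h2
    have ht : MXNormal t := normal_tail h1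
    rcases fin5_cases x with rfl | rfl | rfl | rfl | rfl
    · rw [phi_cons, outF_zero, sc_zero, ih (some 0) ht ?_]
      intro j _ k r he
      exact h1 ⟨[], r, k, by rw [he]; simp [wABC]⟩
    · rw [phi_cons, outF_one, sc_one]
      cases s with
      | none => rw [Option.map_none, ih none ht (by simp)]
      | some j =>
        rw [Option.map_some, ih (some (j + 1)) ht ?_]
        intro j' _ k r he
        exact h2 j rfl (k + 1) r (by rw [List.replicate_succ, List.cons_append, he])
    · cases s with
      | none => rw [phi_cons, outF_two_none, sc_two, ih none ht (by simp)]
      | some j => exact absurd (by simp) (h2 j rfl 0 t)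
    · rw [phi_cons, outF_three, sc_three, ih none ht (by simp)]
    · rw [phi_cons, outF_four, sc_four, ih none ht (by simp)]

lemma phi_nf : ∀ (w : List (Fin 5)) (s : Option ℕ),
    MXNormal (phi X s w) ∧
      (∀ j, s = some j → ∀ k r, phi X s w ≠ List.replicate k 1 ++ 2 :: r) := by
  intro w
  induction w with
  | nil =>
    intro s
    refine ⟨?_, ?_⟩
    · rintro ⟨u, v, i, he⟩
      rw [phi_nil] at he
      simp [wABC] at he
    · intro j _ k r he
      rw [phi_nil] at he
      exact absurd he (by simp)
  | cons x t ih =>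
    intro s
    rcases fin5_cases x with rfl | rfl | rfl | rfl | rfl
    · rw [phi_cons, outF_zero, sc_zero]
      obtain ⟨ih1, ih2⟩ := ih (some 0)
      exact ⟨normal_cons ih1 (fun _ => ih2 0 rfl),
        fun j _ => cons_ne_rep2 (by decide) (fun h => absurd h (by decide))⟩
    · rw [phi_cons, outF_one, sc_one]
      cases s with
      | none =>
        rw [Option.map_none]
        obtain ⟨ih1, _⟩ := ih none
        exact ⟨normal_cons ih1 (fun h => absurd h (by decide)), fun j hj => by cases hj⟩
      | some j =>
        rw [Option.map_some]
        obtain ⟨ih1, ih2⟩ := ih (some (j + 1))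
        exact ⟨normal_cons ih1 (fun h => absurd h (by decide)),
          fun j' _ => cons_ne_rep2 (by decide) (fun _ => ih2 (j + 1) rfl)⟩
    · cases s with
      | none =>
        rw [phi_cons, outF_two_none, sc_two]
        obtain ⟨ih1, _⟩ := ih none
        exact ⟨normal_cons ih1 (fun h => absurd h (by decide)), fun j hj => by cases hj⟩
      | some j =>
        rw [phi_cons, outF_two_some, sc_two]
        obtain ⟨ih1, _⟩ := ih none
        exact ⟨normal_cons ih1 (fun h => absurd h (by split <;> decide)),
          fun j' _ => cons_ne_rep2 (by split <;> decide)
            (fun h => absurd h (by split <;> decide))⟩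
    · rw [phi_cons, outF_three, sc_three]
      obtain ⟨ih1, _⟩ := ih none
      exact ⟨normal_cons ih1 (fun h => absurd h (by decide)),
        fun j _ => cons_ne_rep2 (by decide) (fun h => absurd h (by decide))⟩
    · rw [phi_cons, outF_four, sc_four]
      obtain ⟨ih1, _⟩ := ih none
      exact ⟨normal_cons ih1 (fun h => absurd h (by decide)),
        fun j _ => cons_ne_rep2 (by decide) (fun h => absurd h (by decide))⟩

lemma reduces (w : List (Fin 5)) : Relation.ReflTransGen (RWStep X) w (phi X none w) := by
  suffices H : ∀ n (w : List (Fin 5)), List.count 2 w ≤ n →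
      Relation.ReflTransGen (RWStep X) w (phi X none w) from H _ w le_rfl
  intro n
  induction n using Nat.strong_induction_on with
  | _ n IH =>
    intro w hn
    by_cases h : MXNormal w
    · rw [phi_id w none h (fun j hj => by cases hj)]
    · rw [MXNormal, not_not] at h
      obtain ⟨u, v, i, rfl⟩ := h
      by_cases hi : i ∈ X
      · have hstep : RWStep X (u ++ wABC i ++ v) (u ++ wABD i ++ v) :=
          ⟨u, v, i, Or.inl ⟨hi, rfl, rfl⟩⟩
        have hc := rw_count hstep
        rw [phi_step hstep]
        exact Relation.ReflTransGen.head hstep (IH _ (by omega) _ le_rfl)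
      · have hstep : RWStep X (u ++ wABC i ++ v) (u ++ wABE i ++ v) :=
          ⟨u, v, i, Or.inr ⟨hi, rfl, rfl⟩⟩
        have hc := rw_count hstep
        rw [phi_step hstep]
        exact Relation.ReflTransGen.head hstep (IH _ (by omega) _ le_rfl)

lemma phi_rtg {u v : List (Fin 5)} (h : Relation.ReflTransGen (RWStep X) u v) :
    phi X none u = phi X none v := by
  induction h with
  | refl => rfl
  | tail _ h2 ih => rw [ih, phi_step h2]

lemma phi_eqv {u v : List (Fin 5)} (h : Relation.EqvGen (RWStep X) u v) :
    phi X none u = phi X none v := by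
  induction h with
  | rel _ _ h => exact phi_step h
  | refl _ => rfl
  | symm _ _ _ ih => exact ih.symm
  | trans _ _ _ _ _ ih1 ih2 => exact ih1.trans ih2

lemma rtg_eqv {α : Type*} {r : α → α → Prop} {a b : α} (h : Relation.ReflTransGen r a b) :
    Relation.EqvGen r a b := by
  induction h with
  | refl => exact Relation.EqvGen.refl a
  | tail _ h2 ih => exact Relation.EqvGen.trans _ _ _ ih (Relation.EqvGen.rel _ _ h2)

end MXAux

/-- The rewriting system for `M(X)` is terminating (no infinite rewriting sequences,
i.e. the reverse of one-step rewriting is well-founded) and confluent, and the words with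
no factor `a bⁱ c` form a set of unique normal forms for `M(X)`: every congruence class
(class of the equivalence generated by rewriting) contains exactly one normal form. -/
theorem stmt_13 (X : Set ℕ) :
    WellFounded (fun w' w : List (Fin 5) => RWStep X w w') ∧
    (∀ w p q : List (Fin 5), Relation.ReflTransGen (RWStep X) w p →
      Relation.ReflTransGen (RWStep X) w q →
      ∃ r, Relation.ReflTransGen (RWStep X) p r ∧ Relation.ReflTransGen (RWStep X) q r) ∧
    (∀ w : List (Fin 5), ∃! nf : List (Fin 5),
      MXNormal nf ∧ Relation.EqvGen (RWStep X) w nf) := by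
  refine ⟨?_, ?_, ?_⟩
  · exact Subrelation.wf (fun {w' w} h => MXAux.rw_count h)
      (InvImage.wf (List.count 2) Nat.lt_wfRel.wf)
  · intro w p q hp hq
    refine ⟨MXAux.phi X none w, ?_, ?_⟩
    · rw [MXAux.phi_rtg hp]; exact MXAux.reduces p
    · rw [MXAux.phi_rtg hq]; exact MXAux.reduces q
  · intro w
    refine ⟨MXAux.phi X none w,
      ⟨(MXAux.phi_nf w none).1, MXAux.rtg_eqv (MXAux.reduces w)⟩, ?_⟩
    rintro y ⟨hy, hyw⟩
    calc y = MXAux.phi X none y := (MXAux.phi_id y none hy (fun j hj => by cases hj)).symm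
    _ = MXAux.phi X none w := (MXAux.phi_eqv hyw).symm
end

section
/- Let X ⊆ ℕ and M(X) = ⟨a,b,c,d,e | a bⁱ c = a bⁱ d (i ∈ X), a bʲ c = a bʲ e (j ∉ X)⟩. Then for every n ∈ ℕ: n ∈ X if and only if a bⁿ c = a bⁿ d holds in M(X). Consequently, if the word problem for M(X) is decidable then X is a recursive (computable) subset of ℕ. -/
open scoped Classical

/-- State machine tracking whether the word read so far ends in `a b^k`. -/
def st5 : Option ℕ → Fin 5 → Option ℕ
  | _, 0 => some 0
  | s, 1 => s.map (· + 1)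
  | _, _ => none

/-- Letter transformation: a `c` in context `a b^k` becomes `d` or `e` per membership. -/
noncomputable def tr5 (X : Set ℕ) (s : Option ℕ) (x : Fin 5) : Fin 5 :=
  if x = 2 then
    match s with
    | some k => if k ∈ X then 3 else 4
    | none => 2
  else x

/-- The normal-form map, an invariant of the rewriting system. -/
noncomputable def nf5 (X : Set ℕ) : Option ℕ → List (Fin 5) → List (Fin 5)
  | _, [] => []
  | s, x :: w => tr5 X s x :: nf5 X (st5 s x) w

lemma nf5_append (X : Set ℕ) (u : List (Fin 5)) :
    ∀ (s : Option ℕ) (v : List (Fin 5)),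
      nf5 X s (u ++ v) = nf5 X s u ++ nf5 X (u.foldl st5 s) v := by
  induction u with
  | nil => intro s v; simp [nf5]
  | cons x u ih => intro s v; simp [nf5, ih]

lemma tr5_ne2 (X : Set ℕ) (s : Option ℕ) (x : Fin 5) (h : x ≠ 2) : tr5 X s x = x := by
  simp [tr5, h]

lemma nf5_repl (X : Set ℕ) (z : Fin 5) :
    ∀ (i k : ℕ) (v : List (Fin 5)),
      nf5 X (some k) (List.replicate i 1 ++ z :: v) =
        List.replicate i 1 ++ tr5 X (some (k + i)) z :: nf5 X (st5 (some (k + i)) z) v := by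
  intro i
  induction i with
  | zero => intro k v; simp [nf5]
  | succ i ih =>
      intro k v
      rw [List.replicate_succ, List.cons_append]
      show tr5 X (some k) 1 :: nf5 X (st5 (some k) 1) _ = _
      have h1 : tr5 X (some k) 1 = 1 := tr5_ne2 X _ 1 (by decide)
      have h2 : st5 (some k) 1 = some (k + 1) := rfl
      have h3 : k + 1 + i = k + (i + 1) := by omega
      rw [h1, h2, ih (k + 1), h3]
      simp

lemma nf5_key (X : Set ℕ) (i : ℕ) (s : Option ℕ) (v : List (Fin 5)) :
    nf5 X s (wABC i ++ v) =
      (0 : Fin 5) :: (List.replicate i 1 ++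
        (if i ∈ X then (3 : Fin 5) else 4) :: nf5 X none v) := by
  have h : wABC i ++ v = 0 :: (List.replicate i 1 ++ 2 :: v) := by
    simp [wABC]
  rw [h]
  show tr5 X s 0 :: nf5 X (st5 s 0) _ = _
  have h0 : tr5 X s 0 = 0 := tr5_ne2 X s 0 (by decide)
  have h0' : st5 s 0 = some 0 := by cases s <;> rfl
  rw [h0, h0', nf5_repl]
  have hst : st5 (some (0 + i)) 2 = none := rfl
  rw [hst]
  norm_num [tr5]

lemma nf5_keyzd (X : Set ℕ) (i : ℕ) (s : Option ℕ) (v : List (Fin 5)) (z : Fin 5)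
    (hz : z = 3 ∨ z = 4) :
    nf5 X s ((0 :: (List.replicate i 1 ++ [z])) ++ v) =
      (0 : Fin 5) :: (List.replicate i 1 ++ z :: nf5 X none v) := by
  have h : (0 :: (List.replicate i 1 ++ [z])) ++ v
      = 0 :: (List.replicate i 1 ++ z :: v) := by simp
  rw [h]
  show tr5 X s 0 :: nf5 X (st5 s 0) _ = _
  have h0 : tr5 X s 0 = 0 := tr5_ne2 X s 0 (by decide)
  have h0' : st5 s 0 = some 0 := by cases s <;> rfl
  rw [h0, h0', nf5_repl]
  have hz2 : z ≠ 2 := by rcases hz with h | h <;> subst h <;> decide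
  have hst : st5 (some (0 + i)) z = none := by rcases hz with h | h <;> subst h <;> rfl
  rw [hst, tr5_ne2 X _ z hz2]

lemma nf5_rel (X : Set ℕ) {p : List (Fin 5) × List (Fin 5)} (hp : p ∈ MXRel X)
    (s : Option ℕ) (v : List (Fin 5)) :
    nf5 X s (p.1 ++ v) = nf5 X s (p.2 ++ v) := by
  obtain ⟨i, ⟨hi, rfl⟩ | ⟨hi, rfl⟩⟩ := hp
  · show nf5 X s (wABC i ++ v) = nf5 X s (wABD i ++ v)
    rw [nf5_key X i s v, show wABD i = 0 :: (List.replicate i 1 ++ [3]) from rfl,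
      nf5_keyzd X i s v 3 (Or.inl rfl), if_pos hi]
  · show nf5 X s (wABC i ++ v) = nf5 X s (wABE i ++ v)
    rw [nf5_key X i s v, show wABE i = 0 :: (List.replicate i 1 ++ [4]) from rfl,
      nf5_keyzd X i s v 4 (Or.inr rfl), if_neg hi]

lemma nf5_onestep (X : Set ℕ) {w w' : List (Fin 5)} (h : OneStep (MXRel X) w w')
    (s : Option ℕ) : nf5 X s w = nf5 X s w' := by
  obtain ⟨u, a, b, v, hab, hw, hw'⟩ := h
  subst hw; subst hw'
  rw [List.append_assoc u a v, List.append_assoc u b v,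
    nf5_append X u s (a ++ v), nf5_append X u s (b ++ v)]
  congr 1
  rcases hab with h | h
  · exact nf5_rel X h _ v
  · exact (nf5_rel X h _ v).symm

/-- For `M(X)` presented by `⟨a,b,c,d,e | a bⁱ c = a bⁱ d (i ∈ X), a bʲ c = a bʲ e (j ∉ X)⟩`:
`n ∈ X` iff `a bⁿ c = a bⁿ d` holds in `M(X)`; consequently, if the word problem of `M(X)`
is decidable (computable) then `X` is a recursive subset of `ℕ`. -/
theorem stmt_14 (X : Set ℕ) {M : Type} [Monoid M] (f : Fin 5 → M)
    (hpres : Presents f (MXRel X)) :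
    (∀ n : ℕ, n ∈ X ↔ wordProd f (wABC n) = wordProd f (wABD n)) ∧
    (ComputablePred
        (fun p : List (Fin 5) × List (Fin 5) => wordProd f p.1 = wordProd f p.2) →
      ComputablePred (fun n : ℕ => n ∈ X)) := by
  have main : ∀ n : ℕ, n ∈ X ↔ wordProd f (wABC n) = wordProd f (wABD n) := by
    intro n
    constructor
    · intro hn
      apply (hpres.2 _ _).1
      apply Relation.ReflTransGen.single
      exact ⟨[], wABC n, wABD n, [], Or.inl ⟨n, Or.inl ⟨hn, rfl⟩⟩, by simp, by simp⟩
    · intro h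
      have hr := (hpres.2 _ _).2 h
      have hgen : ∀ u v : List (Fin 5),
          Relation.ReflTransGen (OneStep (MXRel X)) u v →
            nf5 X none u = nf5 X none v := by
        intro u v hr
        induction hr with
        | refl => rfl
        | tail _ hstep ih => exact ih.trans (nf5_onestep X hstep none)
      have hnf : nf5 X none (wABC n) = nf5 X none (wABD n) := hgen _ _ hr
      have h1 : nf5 X none (wABC n) =
          (0 : Fin 5) :: (List.replicate n 1 ++
            [(if n ∈ X then (3 : Fin 5) else 4)]) := by
        have h1' := nf5_key X n none []
        rw [List.append_nil] at h1'
        rw [h1']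
        rfl
      have h2 : nf5 X none (wABD n) =
          (0 : Fin 5) :: (List.replicate n 1 ++ [(3 : Fin 5)]) := by
        have h2' := nf5_keyzd X n none [] 3 (Or.inl rfl)
        rw [List.append_nil] at h2'
        exact h2'
      rw [h1, h2] at hnf
      by_contra hn
      rw [if_neg hn] at hnf
      simp only [List.cons.injEq, List.append_cancel_left_eq] at hnf
      exact absurd hnf.2 (by decide)
  refine ⟨main, fun hWP => ?_⟩
  obtain ⟨g, hg, hp⟩ := ComputablePred.computable_iff.1 hWP
  have hrepl : Computable fun n : ℕ => List.replicate n (1 : Fin 5) := by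
    have hpr : Primrec fun n : ℕ => (List.range n).map (fun _ => (1 : Fin 5)) :=
      Primrec.list_map Primrec.list_range (Primrec.const 1).to₂
    exact (hpr.of_eq fun n => by simp [List.map_const']).to_comp
  have habc : Computable wABC :=
    Primrec.list_cons.to_comp.comp (Computable.const 0)
      (Primrec.list_append.to_comp.comp hrepl (Computable.const [2]))
  have habd : Computable wABD :=
    Primrec.list_cons.to_comp.comp (Computable.const 0)
      (Primrec.list_append.to_comp.comp hrepl (Computable.const [3]))
  apply ComputablePred.computable_iff.2
  refine ⟨fun n => g (wABC n, wABD n), hg.comp (habc.pair habd), ?_⟩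
  funext n
  exact propext ((main n).trans (iff_of_eq (congrFun hp (wABC n, wABD n))))
end

section
/- For any X ⊆ ℕ, the right Cayley graph of the monoid M(X) = ⟨a,b,c,d,e | a bⁱ c = a bⁱ d (i ∈ X), a bʲ c = a bʲ e (j ∉ X)⟩ with respect to {a,b,c,d,e} is a directed rooted tree (rooted at the identity) in which every vertex has in-degree at most 1 and out-degree either 4 or 5; specifically, if the normal form of an element ends in a bⁱ for some i ≥ 0 then it has out-degree 4 (its successors being those by a, b, d, e), and otherwise it has out-degree 5. -/
open Classical in
noncomputable def stp (X : Set ℕ) (st : Option ℕ) (g : Fin 5) : Fin 5 × Option ℕ :=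
  match g.val, st with
  | 0, _ => (0, some 0)
  | 1, _ => (1, st.map (· + 1))
  | 2, some i => (if i ∈ X then 3 else 4, none)
  | _, _ => (g, none)

noncomputable def nfA (X : Set ℕ) : Option ℕ → List (Fin 5) → List (Fin 5)
  | _, [] => []
  | st, g :: w => (stp X st g).1 :: nfA X (stp X st g).2 w

noncomputable def stA (X : Set ℕ) : Option ℕ → List (Fin 5) → Option ℕ
  | st, [] => st
  | st, g :: w => stA X (stp X st g).2 w

def ctx : Option ℕ → List (Fin 5)
  | none => []
  | some i => 0 :: List.replicate i 1

section lemmas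
variable (X : Set ℕ)

@[simp] lemma stp0 (st) : stp X st 0 = (0, some 0) := rfl
@[simp] lemma stp1 (st) : stp X st 1 = (1, st.map (· + 1)) := rfl
open Classical in
@[simp] lemma stp2s (i) : stp X (some i) 2 = (if i ∈ X then 3 else 4, none) := rfl
@[simp] lemma stp2n : stp X none 2 = (2, none) := rfl
@[simp] lemma stp3 (st) : stp X st 3 = (3, none) := rfl
@[simp] lemma stp4 (st) : stp X st 4 = (4, none) := rfl
@[simp] lemma stp_mk0 (st) (h : 0 < 5) : stp X st ⟨0, h⟩ = (0, some 0) := rfl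
@[simp] lemma stp_mk1 (st) (h : 1 < 5) : stp X st ⟨1, h⟩ = (1, st.map (· + 1)) := rfl
open Classical in
@[simp] lemma stp_mk2s (i) (h : 2 < 5) : stp X (some i) ⟨2, h⟩ = (if i ∈ X then 3 else 4, none) := rfl
@[simp] lemma stp_mk2n (h : 2 < 5) : stp X none ⟨2, h⟩ = (2, none) := rfl
@[simp] lemma stp_mk3 (st) (h : 3 < 5) : stp X st ⟨3, h⟩ = (3, none) := rfl
@[simp] lemma stp_mk4 (st) (h : 4 < 5) : stp X st ⟨4, h⟩ = (4, none) := rfl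

@[simp] lemma nfA_nil (st) : nfA X st [] = [] := rfl
@[simp] lemma nfA_cons (st g w) :
    nfA X st (g :: w) = (stp X st g).1 :: nfA X (stp X st g).2 w := rfl
@[simp] lemma stA_nil (st) : stA X st [] = st := rfl
@[simp] lemma stA_cons (st g w) : stA X st (g :: w) = stA X (stp X st g).2 w := rfl

lemma nfA_append (u : List (Fin 5)) : ∀ (st) (v : List (Fin 5)),
    nfA X st (u ++ v) = nfA X st u ++ nfA X (stA X st u) v := by
  induction u with
  | nil => simp
  | cons g u ih => intro st v; simp [ih]

lemma stA_append (u : List (Fin 5)) : ∀ (st) (v : List (Fin 5)),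
    stA X st (u ++ v) = stA X (stA X st u) v := by
  induction u with
  | nil => simp
  | cons g u ih => intro st v; simp [ih]

lemma stp_cases (st : Option ℕ) (g : Fin 5) :
    ((stp X st g).1 = g ∧ ∃ p, ctx st ++ [g] = p ++ ctx (stp X st g).2) ∨
    (∃ i, st = some i ∧ g = 2 ∧ (stp X st g).2 = none ∧
      ((i ∈ X ∧ (stp X st g).1 = 3) ∨ (i ∉ X ∧ (stp X st g).1 = 4))) := by
  obtain ⟨gv, hgv⟩ := g
  interval_cases gv
  · left; exact ⟨rfl, ctx st, by cases st <;> simp [ctx]⟩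
  · cases st with
    | none => left; exact ⟨rfl, [1], by simp [ctx]⟩
    | some i => left; exact ⟨rfl, [], by simp [ctx, List.replicate_succ']⟩
  · cases st with
    | none => left; exact ⟨rfl, [2], by simp [ctx]⟩
    | some i =>
        right
        refine ⟨i, rfl, rfl, rfl, ?_⟩
        by_cases h : i ∈ X
        · left; exact ⟨h, by simp [stp, h]⟩
        · right; exact ⟨h, by simp [stp, h]⟩
  · left; exact ⟨rfl, ctx st ++ [3], by cases st <;> simp [ctx]⟩
  · left; exact ⟨rfl, ctx st ++ [4], by cases st <;> simp [ctx]⟩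

lemma RTG_prepend (R : Set (List (Fin 5) × List (Fin 5))) (p : List (Fin 5)) {w w' : List (Fin 5)}
    (h : Relation.ReflTransGen (OneStep R) w w') :
    Relation.ReflTransGen (OneStep R) (p ++ w) (p ++ w') := by
  refine Relation.ReflTransGen.lift (p ++ ·) ?_ _ _ h
  rintro a b ⟨u, s, t, v, h1, rfl, rfl⟩
  exact ⟨p ++ u, s, t, v, h1, by simp, by simp⟩

lemma reach (w : List (Fin 5)) : ∀ st,
    Relation.ReflTransGen (OneStep (MXRel X)) (ctx st ++ w) (ctx st ++ nfA X st w) := by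
  induction w with
  | nil => intro st; rw [nfA_nil]
  | cons g w ih =>
    intro st
    have h1 : Relation.ReflTransGen (OneStep (MXRel X)) (ctx st ++ g :: w)
        (ctx st ++ (stp X st g).1 :: w) ∧
        ∃ p, ctx st ++ [(stp X st g).1] = p ++ ctx (stp X st g).2 := by
      rcases stp_cases X st g with ⟨hout, p, hp⟩ | ⟨i, hst, hg, hst', hc⟩
      · rw [hout]; exact ⟨Relation.ReflTransGen.refl, p, hp⟩
      · subst hst; subst hg
        constructor
        · refine Relation.ReflTransGen.single ?_
          rcases hc with ⟨hX, hout⟩ | ⟨hX, hout⟩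
          · have hmem : (wABC i, wABD i) ∈ MXRel X := ⟨i, Or.inl ⟨hX, rfl⟩⟩
            exact ⟨[], wABC i, wABD i, w, Or.inl hmem,
              by simp [ctx, wABC], by rw [hout]; simp [ctx, wABD]⟩
          · have hmem : (wABC i, wABE i) ∈ MXRel X := ⟨i, Or.inr ⟨hX, rfl⟩⟩
            exact ⟨[], wABC i, wABE i, w, Or.inl hmem,
              by simp [ctx, wABC], by rw [hout]; simp [ctx, wABE]⟩
        · exact ⟨ctx (some i) ++ [(stp X (some i) 2).1], by simp [hst', ctx]⟩
    obtain ⟨h1, p, hp⟩ := h1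
    refine h1.trans ?_
    have h2 : ∀ v : List (Fin 5), ctx st ++ (stp X st g).1 :: v = p ++ (ctx (stp X st g).2 ++ v) := by
      intro v
      have : ctx st ++ (stp X st g).1 :: v = (ctx st ++ [(stp X st g).1]) ++ v := by simp
      rw [this, hp]; simp
    rw [nfA_cons, h2 w, h2 (nfA X (stp X st g).2 w)]
    exact RTG_prepend _ p (ih _)

lemma nfA_replicate (i : ℕ) : ∀ (k : ℕ) (w : List (Fin 5)),
    nfA X (some k) (List.replicate i 1 ++ w) = List.replicate i 1 ++ nfA X (some (k + i)) w := by
  induction i with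
  | zero => simp
  | succ i ih =>
    intro k w
    rw [List.replicate_succ]
    simp only [List.cons_append, nfA_cons, stp1, Option.map_some]
    rw [ih (k + 1) w]
    simp [List.replicate_succ, Nat.add_assoc, Nat.add_comm 1 i]

lemma stA_replicate (i : ℕ) : ∀ (k : ℕ) (w : List (Fin 5)),
    stA X (some k) (List.replicate i 1 ++ w) = stA X (some (k + i)) w := by
  induction i with
  | zero => simp
  | succ i ih =>
    intro k w
    rw [List.replicate_succ]
    simp only [List.cons_append, stA_cons, stp1, Option.map_some]
    rw [ih (k + 1) w]
    simp [Nat.add_assoc, Nat.add_comm 1 i]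

open Classical in
lemma nfA_wABC (i : ℕ) (st : Option ℕ) (w : List (Fin 5)) :
    nfA X st (wABC i ++ w) =
      (0 :: (List.replicate i 1 ++ [if i ∈ X then 3 else 4])) ++ nfA X none w := by
  have : wABC i ++ w = 0 :: (List.replicate i 1 ++ (2 :: w)) := by simp [wABC]
  rw [this, nfA_cons, stp0, nfA_replicate]
  simp

lemma nfA_wABD (i : ℕ) (st : Option ℕ) (w : List (Fin 5)) :
    nfA X st (wABD i ++ w) = (0 :: (List.replicate i 1 ++ [3])) ++ nfA X none w := by
  have : wABD i ++ w = 0 :: (List.replicate i 1 ++ (3 :: w)) := by simp [wABD]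
  rw [this, nfA_cons, stp0, nfA_replicate]
  simp

lemma nfA_wABE (i : ℕ) (st : Option ℕ) (w : List (Fin 5)) :
    nfA X st (wABE i ++ w) = (0 :: (List.replicate i 1 ++ [4])) ++ nfA X none w := by
  have : wABE i ++ w = 0 :: (List.replicate i 1 ++ (4 :: w)) := by simp [wABE]
  rw [this, nfA_cons, stp0, nfA_replicate]
  simp

lemma nf_onestep {w w' : List (Fin 5)} (h : OneStep (MXRel X) w w') (st : Option ℕ) :
    nfA X st w = nfA X st w' := by
  obtain ⟨u, s, t, v, hst, rfl, rfl⟩ := h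
  rw [List.append_assoc, List.append_assoc,
    nfA_append X u st (s ++ v), nfA_append X u st (t ++ v)]
  congr 1
  rcases hst with ⟨i, ⟨hi, hpq⟩ | ⟨hi, hpq⟩⟩ | ⟨i, ⟨hi, hpq⟩ | ⟨hi, hpq⟩⟩ <;>
      injection hpq with h1 h2 <;> subst h1 <;> subst h2
  · rw [nfA_wABC, nfA_wABD]; simp [hi]
  · rw [nfA_wABC, nfA_wABE]; simp [hi]
  · rw [nfA_wABD, nfA_wABC]; simp [hi]
  · rw [nfA_wABE, nfA_wABC]; simp [hi]

lemma nfA_of_no_factor : ∀ (w : List (Fin 5)) (st : Option ℕ),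
    (¬∃ (u v : List (Fin 5)) (i : ℕ), ctx st ++ w = u ++ wABC i ++ v) →
    nfA X st w = w := by
  intro w
  induction w with
  | nil => intro st _; rfl
  | cons g w ih =>
    intro st h
    rcases stp_cases X st g with ⟨hout, p, hp⟩ | ⟨i, hst, hg, _, _⟩
    · rw [nfA_cons, hout, ih (stp X st g).2]
      intro ⟨u, v, i, huv⟩
      refine h ⟨p ++ u, v, i, ?_⟩
      have : ctx st ++ g :: w = (ctx st ++ [g]) ++ w := by simp
      rw [this, hp, List.append_assoc, huv]
      simp
    · exfalso
      subst hst; subst hg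
      exact h ⟨[], w, i, by simp [ctx, wABC]⟩

lemma stA_ends (u : List (Fin 5)) (i : ℕ) (st : Option ℕ) :
    stA X st (u ++ 0 :: List.replicate i 1) = some i := by
  rw [stA_append, stA_cons, stp0]
  have := stA_replicate X i 0 []
  simpa using this

lemma stA_some (w : List (Fin 5)) : ∀ i : ℕ, stA X none w = some i →
    ∃ u, w = u ++ 0 :: List.replicate i 1 := by
  induction w using List.reverseRecOn with
  | nil => intro i h; simp at h
  | append_singleton v g ih =>
    intro i h
    rw [stA_append] at h
    obtain ⟨gv, hgv⟩ := g
    interval_cases gv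
    · simp only [stA_cons, stp_mk0, stA_nil, Option.some.injEq] at h
      exact ⟨v, by simp [← h]⟩
    · simp only [stA_cons, stp_mk1, stA_nil] at h
      cases hv : stA X none v with
      | none => rw [hv] at h; simp at h
      | some j =>
          rw [hv] at h
          simp only [Option.map_some, Option.some.injEq] at h
          obtain ⟨u, rfl⟩ := ih j hv
          subst h
          exact ⟨u, by simp [List.replicate_succ']⟩
    · cases hv : stA X none v with
      | none => rw [hv] at h; simp at h
      | some j => rw [hv] at h; simp at h
    · simp at h
    · simp at h

end lemmas



section pres
variable (X : Set ℕ) {M : Type} [Monoid M] (f : Fin 5 → M)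

lemma wp_append (u v : List (Fin 5)) :
    wordProd f (u ++ v) = wordProd f u * wordProd f v := by simp [wordProd]

lemma wp_single (g : Fin 5) : wordProd f [g] = f g := by simp [wordProd]

lemma key_iff (hpres : Presents f (MXRel X)) (u v : List (Fin 5)) :
    wordProd f u = wordProd f v ↔ nfA X none u = nfA X none v := by
  constructor
  · intro h
    have h2 := (hpres.2 u v).mpr h
    clear h
    induction h2 with
    | refl => rfl
    | tail _ hs ih => exact ih.trans (nf_onestep X hs none)
  · intro h
    have hu : wordProd f u = wordProd f (nfA X none u) :=
      (hpres.2 _ _).mp (by simpa [ctx] using reach X u none)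
    have hv : wordProd f v = wordProd f (nfA X none v) :=
      (hpres.2 _ _).mp (by simpa [ctx] using reach X v none)
    rw [hu, hv, h]

lemma succ_nf (w : List (Fin 5)) (g : Fin 5) :
    nfA X none (w ++ [g]) = nfA X none w ++ [(stp X (stA X none w) g).1] := by
  rw [nfA_append]; rfl

end pres

/-- The right Cayley graph of `M(X)` over `{a,b,c,d,e}` is a directed rooted tree rooted at
the identity: every vertex is reachable from the identity; every vertex has in-degree at
most 1 (edges with the same target have the same source) and the identity has no incoming
edge; and every vertex has out-degree 4 or 5: if the normal form of the vertex ends in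
`a bⁱ` for some `i ≥ 0` then its distinct successors are exactly those by `a, b, d, e`
(out-degree 4), and otherwise it has 5 distinct successors. -/
theorem stmt_16 (X : Set ℕ) {M : Type} [Monoid M] (f : Fin 5 → M)
    (hpres : Presents f (MXRel X)) :
    (∀ x : M, ∃ w : List (Fin 5), wordProd f w = x) ∧
    (∀ (x₁ x₂ : M) (g₁ g₂ : Fin 5), x₁ * f g₁ = x₂ * f g₂ → x₁ = x₂) ∧
    (∀ (x : M) (g : Fin 5), x * f g ≠ 1) ∧
    (∀ (x : M) (w : List (Fin 5)), MXNormal w → wordProd f w = x →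
      ((∃ (u : List (Fin 5)) (i : ℕ), w = u ++ (0 : Fin 5) :: List.replicate i (1 : Fin 5)) →
        (Set.range fun g : Fin 5 => x * f g) =
          {x * f 0, x * f 1, x * f 3, x * f 4} ∧
        (Set.range fun g : Fin 5 => x * f g).ncard = 4) ∧
      (¬(∃ (u : List (Fin 5)) (i : ℕ),
            w = u ++ (0 : Fin 5) :: List.replicate i (1 : Fin 5)) →
        (Set.range fun g : Fin 5 => x * f g).ncard = 5)) := by
  obtain ⟨hsurj, hcong⟩ := hpres
  have hpres' : Presents f (MXRel X) := ⟨hsurj, hcong⟩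
  have key := key_iff X f hpres'
  refine ⟨fun x => hsurj x, ?_, ?_, ?_⟩
  · -- in-degree at most one
    intro x₁ x₂ g₁ g₂ h
    obtain ⟨w₁, hw₁⟩ := hsurj x₁
    obtain ⟨w₂, hw₂⟩ := hsurj x₂
    have h' : wordProd f (w₁ ++ [g₁]) = wordProd f (w₂ ++ [g₂]) := by
      rw [wp_append, wp_append, wp_single, wp_single, hw₁, hw₂, h]
    have h2 := (key _ _).mp h'
    rw [succ_nf, succ_nf] at h2
    have h3 : nfA X none w₁ = nfA X none w₂ := by
      have := congrArg List.dropLast h2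
      simpa using this
    rw [← hw₁, ← hw₂]
    exact (key _ _).mpr h3
  · -- identity has no incoming edge
    intro x g h
    obtain ⟨w, hw⟩ := hsurj x
    have h' : wordProd f (w ++ [g]) = wordProd f [] := by
      rw [wp_append, wp_single, hw]
      simpa [wordProd] using h
    have h2 := (key _ _).mp h'
    rw [succ_nf] at h2
    simp at h2
  · -- out-degrees
    intro x w hnorm hw
    have hnf : nfA X none w = w := by
      refine nfA_of_no_factor X w none ?_
      intro ⟨u, v, i, huv⟩
      exact hnorm ⟨u, v, i, by simpa [ctx] using huv⟩
    have succeq : ∀ g g' : Fin 5,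
        x * f g = x * f g' ↔ (stp X (stA X none w) g).1 = (stp X (stA X none w) g').1 := by
      intro g g'
      have e : ∀ g : Fin 5, x * f g = wordProd f (w ++ [g]) := by
        intro g; rw [wp_append, wp_single, hw]
      rw [e, e, key, succ_nf, succ_nf, hnf]
      simp
    have dneq : ∀ g g' : Fin 5,
        (stp X (stA X none w) g).1 ≠ (stp X (stA X none w) g').1 → x * f g ≠ x * f g' :=
      fun g g' hne h => hne ((succeq g g').mp h)
    constructor
    · rintro ⟨u, i, hui⟩
      have hst : stA X none w = some i := by rw [hui]; exact stA_ends X u i none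
      have o0 : (stp X (stA X none w) 0).1 = 0 := by rw [hst]; rfl
      have o1 : (stp X (stA X none w) 1).1 = 1 := by rw [hst]; rfl
      have o3 : (stp X (stA X none w) 3).1 = 3 := by rw [hst]; rfl
      have o4 : (stp X (stA X none w) 4).1 = 4 := by rw [hst]; rfl
      have h2 : x * f 2 = x * f 3 ∨ x * f 2 = x * f 4 := by
        by_cases hX : i ∈ X
        · left; exact (succeq 2 3).mpr (by rw [hst]; simp [hX])
        · right; exact (succeq 2 4).mpr (by rw [hst]; simp [hX])
      have hrange : (Set.range fun g : Fin 5 => x * f g)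
          = {x * f 0, x * f 1, x * f 3, x * f 4} := by
        ext y
        constructor
        · rintro ⟨g, rfl⟩
          obtain ⟨gv, hgv⟩ := g
          interval_cases gv
          · exact Set.mem_insert _ _
          · exact Set.mem_insert_of_mem _ (Set.mem_insert _ _)
          · rcases h2 with h2 | h2
            · rw [show (fun g : Fin 5 => x * f g) ⟨2, hgv⟩ = x * f 2 from rfl, h2]
              exact Set.mem_insert_of_mem _ (Set.mem_insert_of_mem _ (Set.mem_insert _ _))
            · rw [show (fun g : Fin 5 => x * f g) ⟨2, hgv⟩ = x * f 2 from rfl, h2]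
              exact Set.mem_insert_of_mem _ (Set.mem_insert_of_mem _
                (Set.mem_insert_of_mem _ rfl))
          · exact Set.mem_insert_of_mem _ (Set.mem_insert_of_mem _ (Set.mem_insert _ _))
          · exact Set.mem_insert_of_mem _ (Set.mem_insert_of_mem _
              (Set.mem_insert_of_mem _ rfl))
        · rintro (rfl | rfl | rfl | rfl)
          · exact ⟨0, rfl⟩
          · exact ⟨1, rfl⟩
          · exact ⟨3, rfl⟩
          · exact ⟨4, rfl⟩
      refine ⟨hrange, ?_⟩
      have d01 : x * f 0 ≠ x * f 1 := dneq 0 1 (by rw [o0, o1]; decide)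
      have d03 : x * f 0 ≠ x * f 3 := dneq 0 3 (by rw [o0, o3]; decide)
      have d04 : x * f 0 ≠ x * f 4 := dneq 0 4 (by rw [o0, o4]; decide)
      have d13 : x * f 1 ≠ x * f 3 := dneq 1 3 (by rw [o1, o3]; decide)
      have d14 : x * f 1 ≠ x * f 4 := dneq 1 4 (by rw [o1, o4]; decide)
      have d34 : x * f 3 ≠ x * f 4 := dneq 3 4 (by rw [o3, o4]; decide)
      rw [hrange,
        Set.ncard_insert_of_notMem (by simp [d01, d03, d04]) (Set.toFinite _),
        Set.ncard_insert_of_notMem (by simp [d13, d14]) (Set.toFinite _),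
        Set.ncard_pair d34]
    · intro hend
      have hst : stA X none w = none := by
        cases h : stA X none w with
        | none => rfl
        | some i =>
            obtain ⟨u, hu⟩ := stA_some X w i h
            exact absurd ⟨u, i, hu⟩ hend
      have hinj : Function.Injective (fun g : Fin 5 => x * f g) := by
        intro g g' h
        have h2 := (succeq g g').mp h
        rw [hst] at h2
        obtain ⟨gv, hgv⟩ := g
        obtain ⟨g'v, hg'v⟩ := g'
        interval_cases gv <;> interval_cases g'v <;> simp_all
      rw [← Set.image_univ, Set.ncard_image_of_injective _ hinj, Set.ncard_univ]
      simp
end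

section
/- Let T₁ and T₂ be locally finite (undirected graph-theoretic) trees of bounded degree in which every vertex has degree at least 3. Then T₁ and T₂ are quasi-isometric as metric spaces (with the path metric). -/
namespace QITree
open SimpleGraph Walk

variable {V : Type*} {T : SimpleGraph V}

/-- A geodesic path exists between reachable vertices. -/
lemma exists_isPath_length_dist (hc : T.Connected) (u v : V) :
    ∃ p : T.Walk u v, p.IsPath ∧ p.length = T.dist u v := by
  classical
  obtain ⟨w, hw⟩ := hc.exists_walk_length_eq_dist u v
  refine ⟨w.bypass, w.bypass_isPath, le_antisymm ?_ ?_⟩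
  · exact hw ▸ w.length_bypass_le
  · exact T.dist_le w.bypass

/-- In a tree, every path realizes the distance. -/
lemma path_length_eq (hT : T.IsTree) {u v : V} (p : T.Walk u v) (hp : p.IsPath) :
    p.length = T.dist u v := by
  obtain ⟨q, hq, hlen⟩ := exists_isPath_length_dist hT.1 u v
  have h2 : (⟨p, hp⟩ : T.Path u v) = ⟨q, hq⟩ := hT.2.path_unique _ _
  rw [Subtype.ext_iff] at h2
  have h3 : p = q := h2
  rw [h3]; exact hlen

lemma dist_adj (hc : T.Connected) {x y : V} (h : T.Adj x y) : T.dist x y = 1 := by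
  have h1 : T.dist x y ≤ 1 := by
    simpa using T.dist_le (Walk.cons h Walk.nil)
  have h0 : T.dist x y ≠ 0 := fun h0 => h.ne (hc.dist_eq_zero_iff.mp h0)
  omega

lemma concat_isPath {u v w : V} {p : T.Walk u v} (hp : p.IsPath) (h : T.Adj v w)
    (hw : w ∉ p.support) : (p.concat h).IsPath := by
  rw [← isPath_reverse_iff, reverse_concat, cons_isPath_iff]
  refine ⟨(isPath_reverse_iff p).2 hp, ?_⟩
  rw [support_reverse, List.mem_reverse]
  exact hw

lemma adj_dist_eq (hT : T.IsTree) (r : V) {x y : V} (h : T.Adj x y) :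
    T.dist r y = T.dist r x + 1 ∨ T.dist r x = T.dist r y + 1 := by
  classical
  obtain ⟨p, hp, hlen⟩ := exists_isPath_length_dist hT.1 r x
  by_cases hy : y ∈ p.support
  · right
    have hq := path_length_eq hT _ (hp.takeUntil hy)
    have hd := path_length_eq hT _ (hp.dropUntil hy)
    have hsum : (p.takeUntil y hy).length + (p.dropUntil y hy).length = p.length := by
      have h5 := congr_arg Walk.length (p.take_spec hy)
      rwa [length_append] at h5
    have h1 : T.dist y x = 1 := dist_adj hT.1 h.symm
    omega
  · left
    have h6 := path_length_eq hT _ (concat_isPath hp h hy)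
    rw [length_concat] at h6
    omega

lemma parent_unique (hT : T.IsTree) (r : V) {x u u' : V}
    (h : T.Adj x u) (hu : T.dist r u + 1 = T.dist r x)
    (h' : T.Adj x u') (hu' : T.dist r u' + 1 = T.dist r x) : u = u' := by
  classical
  have key : ∀ {z : V} (hz : T.Adj x z), T.dist r z + 1 = T.dist r x →
      ∃ (p : T.Walk r z), (p.concat hz.symm).IsPath ∧ (p.concat hz.symm).length = T.dist r x := by
    intro z hz hdz
    obtain ⟨p, hp, hlen⟩ := exists_isPath_length_dist hT.1 r z
    have hxs : x ∉ p.support := by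
      intro hxp
      have h1 := path_length_eq hT _ (hp.takeUntil hxp)
      have h2 := path_length_eq hT _ (hp.dropUntil hxp)
      have hsum : (p.takeUntil x hxp).length + (p.dropUntil x hxp).length = p.length := by
        have h5 := congr_arg Walk.length (p.take_spec hxp)
        rwa [length_append] at h5
      have h3 : T.dist x z = 1 := dist_adj hT.1 hz
      omega
    exact ⟨p, concat_isPath hp hz.symm hxs, by rw [length_concat]; omega⟩
  obtain ⟨p, hp, _⟩ := key h hu
  obtain ⟨p', hp', _⟩ := key h' hu'
  have heq : (⟨p.concat h.symm, hp⟩ : T.Path r x) = ⟨p'.concat h'.symm, hp'⟩ :=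
    hT.2.path_unique _ _
  rw [Subtype.ext_iff] at heq
  have heq2 : p.concat h.symm = p'.concat h'.symm := heq
  have heq3 := congr_arg (fun w => w.reverse.support) heq2
  simp only [reverse_concat, support_cons] at heq3
  rw [support_eq_cons p.reverse, support_eq_cons p'.reverse] at heq3
  simp only [List.cons.injEq] at heq3
  exact heq3.2.1


open Classical in
noncomputable def parent (T : SimpleGraph V) (r x : V) : V :=
  if h : ∃ u, T.Adj x u ∧ T.dist r u + 1 = T.dist r x then h.choose else r

def childrenSet (T : SimpleGraph V) (r x : V) : Set V :=
  {y | T.Adj x y ∧ T.dist r y = T.dist r x + 1}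

lemma exists_parent (hc : T.Connected) {r x : V} (hx : x ≠ r) :
    ∃ u, T.Adj x u ∧ T.dist r u + 1 = T.dist r x := by
  obtain ⟨p, hp, hlen⟩ := exists_isPath_length_dist hc r x
  obtain ⟨u, h, w, hp'⟩ := Walk.exists_eq_cons_of_ne hx p.reverse
  refine ⟨u, h, ?_⟩
  have h1 : T.dist r u ≤ w.reverse.length := T.dist_le w.reverse
  have h2 : w.length + 1 = T.dist r x := by
    have h5 := congr_arg Walk.length hp'
    rw [Walk.length_reverse, Walk.length_cons] at h5
    omega
  have h3 : T.dist r x ≤ T.dist r u + 1 := by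
    have h6 := hc.dist_triangle (u := r) (v := u) (w := x)
    have h4 : T.dist u x = 1 := dist_adj hc h.symm
    omega
  rw [Walk.length_reverse] at h1
  omega

lemma parent_adj (hc : T.Connected) {r x : V} (hx : x ≠ r) :
    T.Adj x (parent T r x) ∧ T.dist r (parent T r x) + 1 = T.dist r x := by
  have h := exists_parent hc hx
  rw [parent, dif_pos h]
  exact h.choose_spec

lemma dist_root_pos (hc : T.Connected) {r x : V} (hx : x ≠ r) : 0 < T.dist r x :=
  Nat.pos_of_ne_zero fun h0 => hx (hc.dist_eq_zero_iff.mp h0).symm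

lemma parent_eq (hT : T.IsTree) {r x u : V} (h : T.Adj x u)
    (hd : T.dist r u + 1 = T.dist r x) : parent T r x = u := by
  have hx : x ≠ r := by
    intro h0
    rw [h0, SimpleGraph.dist_self] at hd
    omega
  obtain ⟨h1, h2⟩ := parent_adj hT.1 hx
  exact parent_unique hT r h1 h2 h hd

lemma childrenSet_subset_neighborSet (r x : V) :
    childrenSet T r x ⊆ T.neighborSet x := fun y hy => hy.1

noncomputable def childFinset (T : SimpleGraph V)
    (hlf : ∀ v : V, (T.neighborSet v).Finite) (r x : V) : Finset V :=
  ((hlf x).subset (childrenSet_subset_neighborSet r x)).toFinset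

noncomputable def cdeg (T : SimpleGraph V)
    (hlf : ∀ v : V, (T.neighborSet v).Finite) (r x : V) : ℕ :=
  (childFinset T hlf r x).card

noncomputable def enum (T : SimpleGraph V)
    (hlf : ∀ v : V, (T.neighborSet v).Finite) (r x : V) (j : ℕ) : V :=
  (childFinset T hlf r x).toList.getD j x

variable {hlf : ∀ v : V, (T.neighborSet v).Finite} {r : V}

lemma mem_childFinset {x y : V} :
    y ∈ childFinset T hlf r x ↔ T.Adj x y ∧ T.dist r y = T.dist r x + 1 := by
  rw [childFinset, Set.Finite.mem_toFinset]; exact Iff.rfl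

lemma child_ne_root {x y : V} (hy : y ∈ childFinset T hlf r x) :
    y ≠ r := by
  intro h0
  have h1 := (mem_childFinset.mp hy).2
  rw [h0, SimpleGraph.dist_self] at h1
  omega

lemma parent_child (hT : T.IsTree) {x y : V} (hy : y ∈ childFinset T hlf r x) :
    parent T r y = x := by
  obtain ⟨h1, h2⟩ := mem_childFinset.mp hy
  exact parent_eq hT (r := r) h1.symm (by omega)

lemma cdeg_eq_ncard (x : V) : cdeg T hlf r x = (childrenSet T r x).ncard :=
  (Set.ncard_eq_toFinset_card _ ((hlf x).subset (childrenSet_subset_neighborSet r x))).symm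

lemma cdeg_le {D : ℕ} (hD : ∀ v, (T.neighborSet v).ncard ≤ D) (x : V) :
    cdeg T hlf r x ≤ D := by
  rw [cdeg_eq_ncard]
  exact le_trans (Set.ncard_le_ncard (childrenSet_subset_neighborSet r x) (hlf x)) (hD x)

lemma two_le_cdeg (hT : T.IsTree) (hmin : ∀ v, 3 ≤ (T.neighborSet v).ncard) (x : V) :
    2 ≤ cdeg T hlf r x := by
  rw [cdeg_eq_ncard]
  by_cases hx : x = r
  · have hsub : T.neighborSet x ⊆ childrenSet T r x := by
      intro y hy
      rcases adj_dist_eq hT r hy with h | h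
      · exact ⟨hy, h⟩
      · rw [hx, SimpleGraph.dist_self] at h
        omega
    have h4 := Set.ncard_le_ncard hsub ((hlf x).subset (childrenSet_subset_neighborSet r x))
    have h3 := hmin x
    omega
  · have hsub : T.neighborSet x \ {parent T r x} ⊆ childrenSet T r x := by
      intro y hy
      obtain ⟨hy1, hy2⟩ := hy
      rcases adj_dist_eq hT r hy1 with h | h
      · exact ⟨hy1, h⟩
      · exact absurd (parent_eq hT (r := r) hy1 (by omega)).symm hy2
    have h1 := Set.ncard_le_ncard hsub ((hlf x).subset (childrenSet_subset_neighborSet r x))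
    have h2 : (T.neighborSet x \ {parent T r x}).ncard + 1 = (T.neighborSet x).ncard := by
      apply Set.ncard_diff_singleton_add_one _ (hlf x)
      exact (parent_adj hT.1 hx).1
    have h3 := hmin x
    omega

lemma enum_mem {x : V} {j : ℕ} (hj : j < cdeg T hlf r x) :
    enum T hlf r x j ∈ childFinset T hlf r x := by
  rw [enum, List.getD_eq_getElem _ _ (by rwa [Finset.length_toList])]
  rw [← Finset.mem_toList]
  exact List.getElem_mem _

lemma enum_inj {x : V} {i j : ℕ} (hi : i < cdeg T hlf r x) (hj : j < cdeg T hlf r x)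
    (h : enum T hlf r x i = enum T hlf r x j) : i = j := by
  rw [enum, enum, List.getD_eq_getElem _ _ (by rwa [Finset.length_toList]),
    List.getD_eq_getElem _ _ (by rwa [Finset.length_toList])] at h
  exact ((childFinset T hlf r x).nodup_toList.getElem_inj_iff).mp h

lemma enum_surj {x y : V} (hy : y ∈ childFinset T hlf r x) :
    ∃ j, j < cdeg T hlf r x ∧ enum T hlf r x j = y := by
  rw [← Finset.mem_toList, List.mem_iff_getElem] at hy
  obtain ⟨j, hj, hjy⟩ := hy
  rw [Finset.length_toList] at hj
  exact ⟨j, hj, by rw [enum, List.getD_eq_getElem _ _ (by rwa [Finset.length_toList])]; exact hjy⟩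


------------------------------------------------------------------
-- New definitions

def entryWord (j m : ℕ) : List Bool :=
  if j + 1 < m then true :: List.replicate j false
  else if j + 1 = m then List.replicate m false
  else true :: List.replicate (m - 1) false

noncomputable def stepFn (T : SimpleGraph V) (hlf : ∀ v : V, (T.neighborSet v).Finite)
    (r : V) (b : Bool) (st : V × ℕ) : V × ℕ :=
  let m := cdeg T hlf r st.1 - 1
  if b then (if st.2 + 1 < m then (enum T hlf r st.1 st.2, 0) else (enum T hlf r st.1 m, 0))
  else (if st.2 + 1 < m then (st.1, st.2 + 1) else (enum T hlf r st.1 (m - 1), 0))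

noncomputable def rho (T : SimpleGraph V) (hlf : ∀ v : V, (T.neighborSet v).Finite)
    (r : V) : List Bool → V × ℕ
  | [] => (r, 0)
  | b :: l => stepFn T hlf r b (rho T hlf r l)

noncomputable def piMap (T : SimpleGraph V) (hlf : ∀ v : V, (T.neighborSet v).Finite)
    (r : V) (l : List Bool) : V := (rho T hlf r l).1

open Classical in
noncomputable def idx (T : SimpleGraph V) (hlf : ∀ v : V, (T.neighborSet v).Finite)
    (r : V) (y : V) : ℕ :=
  if h : ∃ j, j < cdeg T hlf r (parent T r y) ∧ enum T hlf r (parent T r y) j = y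
  then h.choose else 0

open Classical in
noncomputable def sAux (T : SimpleGraph V) (hlf : ∀ v : V, (T.neighborSet v).Finite)
    (r : V) : ℕ → V → List Bool
  | 0, _ => []
  | n+1, x => if x = r then [] else
      entryWord (idx T hlf r x) (cdeg T hlf r (parent T r x) - 1) ++
        sAux T hlf r n (parent T r x)

noncomputable def sMap (T : SimpleGraph V) (hlf : ∀ v : V, (T.neighborSet v).Finite)
    (r : V) (x : V) : List Bool := sAux T hlf r (T.dist r x) x


lemma stepFn_false_stay {hlf : ∀ v : V, (T.neighborSet v).Finite} {r : V} {st : V × ℕ}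
    (h : st.2 + 1 < cdeg T hlf r st.1 - 1) :
    stepFn T hlf r false st = (st.1, st.2 + 1) := by
  rw [stepFn]
  simp only [Bool.false_eq_true, if_false, if_pos h]

lemma stepFn_false_enter {hlf : ∀ v : V, (T.neighborSet v).Finite} {r : V} {st : V × ℕ}
    (h : ¬ (st.2 + 1 < cdeg T hlf r st.1 - 1)) :
    stepFn T hlf r false st = (enum T hlf r st.1 (cdeg T hlf r st.1 - 1 - 1), 0) := by
  rw [stepFn]
  simp only [Bool.false_eq_true, if_false, if_neg h]

lemma stepFn_true_low {hlf : ∀ v : V, (T.neighborSet v).Finite} {r : V} {st : V × ℕ}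
    (h : st.2 + 1 < cdeg T hlf r st.1 - 1) :
    stepFn T hlf r true st = (enum T hlf r st.1 st.2, 0) := by
  rw [stepFn]
  simp only [if_true, if_pos h]

lemma stepFn_true_high {hlf : ∀ v : V, (T.neighborSet v).Finite} {r : V} {st : V × ℕ}
    (h : ¬ (st.2 + 1 < cdeg T hlf r st.1 - 1)) :
    stepFn T hlf r true st = (enum T hlf r st.1 (cdeg T hlf r st.1 - 1), 0) := by
  rw [stepFn]
  simp only [if_true, if_neg h]

lemma rho_cons {hlf : ∀ v : V, (T.neighborSet v).Finite} {r : V} (b : Bool) (l : List Bool) :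
    rho T hlf r (b :: l) = stepFn T hlf r b (rho T hlf r l) := rfl

------------------------------------------------------------------

section
variable {hlf : ∀ v : V, (T.neighborSet v).Finite} {r : V}

lemma idx_spec (hT : T.IsTree) {y : V} (hy : y ≠ r) :
    idx T hlf r y < cdeg T hlf r (parent T r y) ∧
      enum T hlf r (parent T r y) (idx T hlf r y) = y := by
  obtain ⟨h1, h2⟩ := parent_adj hT.1 hy
  have hmem : y ∈ childFinset T hlf r (parent T r y) :=
    mem_childFinset.mpr ⟨h1.symm, by omega⟩
  have hex := enum_surj hmem
  rw [idx, dif_pos hex]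
  exact hex.choose_spec

lemma idx_enum (hT : T.IsTree) {x : V} {j : ℕ} (hj : j < cdeg T hlf r x) :
    idx T hlf r (enum T hlf r x j) = j := by
  have hmem := enum_mem hj
  have hpar : parent T r (enum T hlf r x j) = x := parent_child hT hmem
  have hne : enum T hlf r x j ≠ r := child_ne_root hmem
  obtain ⟨h1, h2⟩ := idx_spec (hlf := hlf) hT hne
  rw [hpar] at h1 h2
  exact enum_inj h1 hj h2

lemma sMap_root : sMap T hlf r r = [] := by
  rw [sMap, SimpleGraph.dist_self, sAux]

lemma sMap_eq (hT : T.IsTree) {x : V} (hx : x ≠ r) :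
    sMap T hlf r x = entryWord (idx T hlf r x) (cdeg T hlf r (parent T r x) - 1) ++
      sMap T hlf r (parent T r x) := by
  have hpos := dist_root_pos hT.1 hx
  obtain ⟨k, hk⟩ : ∃ k, T.dist r x = k + 1 := ⟨T.dist r x - 1, by omega⟩
  have hpd : T.dist r (parent T r x) = k := by
    have := (parent_adj hT.1 hx).2
    omega
  rw [sMap, hk, sAux, if_neg hx, sMap, hpd]

lemma rho_rep (k : ℕ) {t : List Bool} {x : V} {j : ℕ}
    (ht : rho T hlf r t = (x, j)) (hk : j + k < cdeg T hlf r x - 1) :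
    rho T hlf r (List.replicate k false ++ t) = (x, j + k) := by
  induction k with
  | zero => simpa using ht
  | succ n ih =>
    have h1 : rho T hlf r (List.replicate n false ++ t) = (x, j + n) := ih (by omega)
    rw [List.replicate_succ, List.cons_append, rho_cons, h1,
      stepFn_false_stay (st := (x, j + n)) (show j + n + 1 < cdeg T hlf r x - 1 by omega)]
    show (x, j + n + 1) = (x, j + (n + 1))
    simp [Nat.add_assoc]

lemma rho_entry {t : List Bool} {x : V} (ht : rho T hlf r t = (x, 0)) {j : ℕ}
    (hj : j < cdeg T hlf r x) (h2 : 2 ≤ cdeg T hlf r x) :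
    rho T hlf r (entryWord j (cdeg T hlf r x - 1) ++ t) = (enum T hlf r x j, 0) := by
  set m := cdeg T hlf r x - 1 with hm
  have hm1 : 1 ≤ m := by omega
  rw [entryWord]
  by_cases hc1 : j + 1 < m
  · rw [if_pos hc1]
    have h3 : rho T hlf r (List.replicate j false ++ t) = (x, j) := by
      simpa using rho_rep j ht (by omega)
    rw [List.cons_append, rho_cons, h3,
      stepFn_true_low (st := (x, j)) (show j + 1 < cdeg T hlf r x - 1 by omega)]
  · rw [if_neg hc1]
    have h3 : rho T hlf r (List.replicate (m-1) false ++ t) = (x, m - 1) := by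
      simpa using rho_rep (m-1) ht (by omega)
    by_cases hc2 : j + 1 = m
    · rw [if_pos hc2]
      have h4 : List.replicate m false = false :: List.replicate (m-1) false := by
        conv_lhs => rw [show m = (m - 1) + 1 by omega, List.replicate_succ]
      rw [h4, List.cons_append, rho_cons, h3,
        stepFn_false_enter (st := (x, m-1)) (show ¬ (m - 1 + 1 < cdeg T hlf r x - 1) by omega)]
      show (enum T hlf r x (m - 1), 0) = _
      rw [show m - 1 = j by omega]
    · rw [if_neg hc2]
      have hj' : j = m := by omega
      rw [List.cons_append, rho_cons, h3,
        stepFn_true_high (st := (x, m-1)) (show ¬ (m - 1 + 1 < cdeg T hlf r x - 1) by omega)]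
      show (enum T hlf r x m, 0) = _
      rw [hj']

lemma rho_sMap (hT : T.IsTree) (hmin : ∀ v, 3 ≤ (T.neighborSet v).ncard) (x : V) :
    rho T hlf r (sMap T hlf r x) = (x, 0) := by
  suffices h : ∀ n x, T.dist r x = n → rho T hlf r (sMap T hlf r x) = (x, 0) by
    exact h _ x rfl
  intro n
  induction n using Nat.strong_induction_on with
  | _ n ih =>
    intro x hx
    by_cases hxr : x = r
    · subst hxr
      rw [sMap_root]
      rfl
    · rw [sMap_eq hT hxr]
      have hpd := (parent_adj hT.1 hxr).2
      have hrec : rho T hlf r (sMap T hlf r (parent T r x)) = (parent T r x, 0) :=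
        ih (T.dist r (parent T r x)) (by omega) _ rfl
      obtain ⟨hi1, hi2⟩ := idx_spec (hlf := hlf) hT hxr
      rw [rho_entry hrec hi1 (two_le_cdeg hT hmin _), hi2]

lemma inv (hT : T.IsTree) (hmin : ∀ v, 3 ≤ (T.neighborSet v).ncard) (l : List Bool) :
    (rho T hlf r l).2 + 1 < cdeg T hlf r (rho T hlf r l).1 ∧
      l = List.replicate (rho T hlf r l).2 false ++ sMap T hlf r (rho T hlf r l).1 := by
  induction l with
  | nil =>
    refine ⟨?_, ?_⟩
    · have := two_le_cdeg (hlf := hlf) (r := r) hT hmin r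
      show 0 + 1 < cdeg T hlf r r
      omega
    · show ([] : List Bool) = List.replicate 0 false ++ sMap T hlf r r
      rw [sMap_root]
      rfl
  | cons b l ih =>
    rcases hst : rho T hlf r l with ⟨x, j⟩
    rw [hst] at ih
    obtain ⟨ih1, ih2⟩ := ih
    simp only at ih1 ih2
    set m := cdeg T hlf r x - 1 with hm
    have hm1 : 1 ≤ m := by omega
    have hjm : j < m := by omega
    have hrho : rho T hlf r (b :: l) = stepFn T hlf r b (x, j) := by rw [rho_cons, hst]
    by_cases hb : b = true
    · subst hb
      by_cases hc1 : j + 1 < m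
      · have hnew : rho T hlf r (true :: l) = (enum T hlf r x j, 0) := by
          rw [hrho, stepFn_true_low (st := (x, j)) (show j + 1 < cdeg T hlf r x - 1 by omega)]
        rw [hnew]
        have hjc : j < cdeg T hlf r x := by omega
        refine ⟨by show 0 + 1 < cdeg T hlf r (enum T hlf r x j); have := two_le_cdeg (hlf := hlf) (r := r) hT hmin (enum T hlf r x j); omega, ?_⟩
        show true :: l = List.replicate 0 false ++ sMap T hlf r (enum T hlf r x j)
        have hne := child_ne_root (enum_mem hjc)
        rw [sMap_eq hT hne, parent_child hT (enum_mem hjc), idx_enum hT hjc, ← hm]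
        rw [entryWord, if_pos hc1, ih2]
        simp
      · have hj' : j = m - 1 := by omega
        have hmc : m < cdeg T hlf r x := by omega
        have hnew : rho T hlf r (true :: l) = (enum T hlf r x m, 0) := by
          rw [hrho, stepFn_true_high (st := (x, j))
            (show ¬ (j + 1 < cdeg T hlf r x - 1) by omega)]
        rw [hnew]
        refine ⟨by show 0 + 1 < cdeg T hlf r (enum T hlf r x m); have := two_le_cdeg (hlf := hlf) (r := r) hT hmin (enum T hlf r x m); omega, ?_⟩
        show true :: l = List.replicate 0 false ++ sMap T hlf r (enum T hlf r x m)
        have hne := child_ne_root (enum_mem hmc)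
        rw [sMap_eq hT hne, parent_child hT (enum_mem hmc), idx_enum hT hmc, ← hm]
        rw [entryWord, if_neg (by omega), if_neg (by omega), ih2, hj']
        simp
    · have hb' : b = false := by simpa using hb
      subst hb'
      by_cases hc1 : j + 1 < m
      · have hnew : rho T hlf r (false :: l) = (x, j + 1) := by
          rw [hrho, stepFn_false_stay (st := (x, j)) (show j + 1 < cdeg T hlf r x - 1 by omega)]
        rw [hnew]
        refine ⟨by show j + 1 + 1 < cdeg T hlf r x; omega, ?_⟩
        show false :: l = List.replicate (j+1) false ++ sMap T hlf r x
        rw [List.replicate_succ, List.cons_append, ← ih2]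
      · have hj' : j = m - 1 := by omega
        have hmc : m - 1 < cdeg T hlf r x := by omega
        have hnew : rho T hlf r (false :: l) = (enum T hlf r x (m-1), 0) := by
          rw [hrho, stepFn_false_enter (st := (x, j))
            (show ¬ (j + 1 < cdeg T hlf r x - 1) by omega)]
        rw [hnew]
        refine ⟨by show 0 + 1 < cdeg T hlf r (enum T hlf r x (m-1)); have := two_le_cdeg (hlf := hlf) (r := r) hT hmin (enum T hlf r x (m-1)); omega, ?_⟩
        show false :: l = List.replicate 0 false ++ sMap T hlf r (enum T hlf r x (m-1))
        have hne := child_ne_root (enum_mem hmc)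
        rw [sMap_eq hT hne, parent_child hT (enum_mem hmc), idx_enum hT hmc, ← hm]
        rw [entryWord, if_neg (by omega), if_pos (by omega), ih2, hj']
        have h4 : List.replicate m false = false :: List.replicate (m-1) false := by
          conv_lhs => rw [show m = (m - 1) + 1 by omega, List.replicate_succ]
        rw [h4]
        simp

lemma pi_sMap (hT : T.IsTree) (hmin : ∀ v, 3 ≤ (T.neighborSet v).ncard) (x : V) :
    piMap T hlf r (sMap T hlf r x) = x := by
  rw [piMap, rho_sMap hT hmin]

lemma pi_step (hT : T.IsTree) (hmin : ∀ v, 3 ≤ (T.neighborSet v).ncard) (b : Bool)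
    (l : List Bool) :
    piMap T hlf r (b :: l) = piMap T hlf r l ∨
      T.Adj (piMap T hlf r l) (piMap T hlf r (b :: l)) := by
  obtain ⟨ih1, _⟩ := inv hT hmin (hlf := hlf) (r := r) l
  rcases hst : rho T hlf r l with ⟨x, j⟩
  rw [hst] at ih1
  simp only at ih1
  have hrho : rho T hlf r (b :: l) = stepFn T hlf r b (x, j) := by rw [rho_cons, hst]
  have hadj : ∀ i, i < cdeg T hlf r x → T.Adj x (enum T hlf r x i) := fun i hi =>
    (mem_childFinset.mp (enum_mem hi)).1
  have hpl : piMap T hlf r l = x := by rw [piMap, hst]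
  set m := cdeg T hlf r x - 1 with hm
  by_cases hb : b = true
  · subst hb
    by_cases hc1 : j + 1 < m
    · right
      rw [hpl, piMap, hrho,
        stepFn_true_low (st := (x, j)) (show j + 1 < cdeg T hlf r x - 1 by omega)]
      exact hadj j (by omega)
    · right
      rw [hpl, piMap, hrho,
        stepFn_true_high (st := (x, j)) (show ¬ (j + 1 < cdeg T hlf r x - 1) by omega)]
      exact hadj m (by omega)
  · have hb' : b = false := by simpa using hb
    subst hb'
    by_cases hc1 : j + 1 < m
    · left
      rw [piMap, hrho,
        stepFn_false_stay (st := (x, j)) (show j + 1 < cdeg T hlf r x - 1 by omega), hpl]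
    · right
      rw [hpl, piMap, hrho,
        stepFn_false_enter (st := (x, j)) (show ¬ (j + 1 < cdeg T hlf r x - 1) by omega)]
      exact hadj (m-1) (by omega)

end

------------------------------------------------------------------
-- The model graph on `List Bool`

def MG : SimpleGraph (List Bool) where
  Adj a b := (∃ c, b = c :: a) ∨ (∃ c, a = c :: b)
  symm := by
    constructor
    intro a b h
    tauto
  loopless := by
    constructor
    intro a h
    rcases h with ⟨c, h⟩ | ⟨c, h⟩ <;>
      exact absurd (congrArg List.length h) (by simp)

lemma MG_adj_cons (b : Bool) (l : List Bool) : MG.Adj (b :: l) l := Or.inr ⟨b, rfl⟩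

lemma MG_reachable_nil (l : List Bool) : MG.Reachable l [] := by
  induction l with
  | nil => rfl
  | cons b l ih => exact ((MG_adj_cons b l).reachable).trans ih

lemma MG_connected : MG.Connected where
  preconnected := fun a b => (MG_reachable_nil a).trans (MG_reachable_nil b).symm
  nonempty := ⟨[]⟩

lemma MG_dist_append_le (w t : List Bool) : MG.dist (w ++ t) t ≤ w.length := by
  induction w with
  | nil => simp [SimpleGraph.dist_self]
  | cons b w ih =>
    have h1 := MG_connected.dist_triangle (u := (b :: w) ++ t) (v := w ++ t) (w := t)
    have h2 : MG.dist ((b :: w) ++ t) (w ++ t) ≤ 1 := by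
      simpa using MG.dist_le (Walk.cons (MG_adj_cons b (w ++ t)) Walk.nil)
    simp only [List.length_cons]
    omega

lemma entryWord_length {j m : ℕ} (hm : 1 ≤ m) (hj : j < m + 1) :
    (entryWord j m).length ≤ m := by
  rw [entryWord]
  by_cases hc1 : j + 1 < m
  · rw [if_pos hc1]; simp; omega
  · rw [if_neg hc1]
    by_cases hc2 : j + 1 = m
    · rw [if_pos hc2]; simp
    · rw [if_neg hc2]; simp; omega

section
variable {hlf : ∀ v : V, (T.neighborSet v).Finite} {r : V}

lemma pi_adj_le_one (hT : T.IsTree) (hmin : ∀ v, 3 ≤ (T.neighborSet v).ncard)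
    {a b : List Bool} (h : MG.Adj a b) :
    T.dist (piMap T hlf r a) (piMap T hlf r b) ≤ 1 := by
  have key : ∀ (c : Bool) (l : List Bool),
      T.dist (piMap T hlf r l) (piMap T hlf r (c :: l)) ≤ 1 := by
    intro c l
    rcases pi_step hT hmin (hlf := hlf) (r := r) c l with h | h
    · rw [h, SimpleGraph.dist_self]; omega
    · rw [dist_adj hT.1 h]
  rcases h with ⟨c, hbc⟩ | ⟨c, hac⟩
  · subst hbc
    exact key c a
  · subst hac
    rw [SimpleGraph.dist_comm]
    exact key c b

lemma pi_dist_le (hT : T.IsTree) (hmin : ∀ v, 3 ≤ (T.neighborSet v).ncard)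
    (a b : List Bool) :
    T.dist (piMap T hlf r a) (piMap T hlf r b) ≤ MG.dist a b := by
  obtain ⟨w, hw⟩ := MG_connected.exists_walk_length_eq_dist a b
  rw [← hw]
  clear hw
  induction w with
  | nil => simp [SimpleGraph.dist_self]
  | cons h w ih =>
    rename_i u v z
    have h1 := hT.1.dist_triangle (u := piMap T hlf r u) (v := piMap T hlf r v)
      (w := piMap T hlf r z)
    have h2 := pi_adj_le_one (hlf := hlf) (r := r) hT hmin h
    simp only [Walk.length_cons]
    omega

lemma sMap_adj_le {D : ℕ} (hT : T.IsTree) (hmin : ∀ v, 3 ≤ (T.neighborSet v).ncard)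
    (hD : ∀ v, (T.neighborSet v).ncard ≤ D) {x y : V} (h : T.Adj x y) :
    MG.dist (sMap T hlf r x) (sMap T hlf r y) ≤ D := by
  have key : ∀ {u v : V}, T.Adj u v → T.dist r v = T.dist r u + 1 →
      MG.dist (sMap T hlf r u) (sMap T hlf r v) ≤ D := by
    intro u v huv hd
    have hmem : v ∈ childFinset T hlf r u := mem_childFinset.mpr ⟨huv, hd⟩
    have hne : v ≠ r := child_ne_root hmem
    have hv := sMap_eq (hlf := hlf) hT hne
    rw [parent_child hT hmem] at hv
    rw [SimpleGraph.dist_comm, hv]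
    have h2 := two_le_cdeg (hlf := hlf) (r := r) hT hmin u
    have hcD := cdeg_le (hlf := hlf) (r := r) hD u
    have hidx := idx_spec (hlf := hlf) hT hne
    rw [parent_child hT hmem] at hidx
    have hlen : (entryWord (idx T hlf r v) (cdeg T hlf r u - 1)).length ≤
        cdeg T hlf r u - 1 :=
      entryWord_length (by omega) (by omega)
    have := MG_dist_append_le (entryWord (idx T hlf r v) (cdeg T hlf r u - 1))
      (sMap T hlf r u)
    omega
  rcases adj_dist_eq hT r h with hd | hd
  · exact key h hd
  · rw [SimpleGraph.dist_comm]
    exact key h.symm hd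

lemma sMap_dist_le {D : ℕ} (hT : T.IsTree) (hmin : ∀ v, 3 ≤ (T.neighborSet v).ncard)
    (hD : ∀ v, (T.neighborSet v).ncard ≤ D) (x y : V) :
    MG.dist (sMap T hlf r x) (sMap T hlf r y) ≤ D * T.dist x y := by
  obtain ⟨w, hw⟩ := hT.1.exists_walk_length_eq_dist x y
  rw [← hw]
  clear hw
  induction w with
  | nil => simp [SimpleGraph.dist_self]
  | cons h w ih =>
    rename_i u v z
    have h1 := MG_connected.dist_triangle (u := sMap T hlf r u) (v := sMap T hlf r v)
      (w := sMap T hlf r z)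
    have h2 := sMap_adj_le (hlf := hlf) (r := r) hT hmin hD h
    simp only [Walk.length_cons]
    have : D * (w.length + 1) = D * w.length + D := by ring
    omega

lemma sMap_pi_close {D : ℕ} (hT : T.IsTree) (hmin : ∀ v, 3 ≤ (T.neighborSet v).ncard)
    (hD : ∀ v, (T.neighborSet v).ncard ≤ D) (l : List Bool) :
    MG.dist l (sMap T hlf r (piMap T hlf r l)) ≤ D := by
  obtain ⟨h1, h2⟩ := inv (hlf := hlf) (r := r) hT hmin l
  rcases hst : rho T hlf r l with ⟨x, j⟩
  rw [hst] at h1 h2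
  rw [piMap, hst]
  simp only at h1 h2 ⊢
  have h3 := MG_dist_append_le (List.replicate j false) (sMap T hlf r x)
  rw [List.length_replicate] at h3
  have h4 : j ≤ D := by
    have := cdeg_le (hlf := hlf) (r := r) hD x
    omega
  calc MG.dist l (sMap T hlf r x)
      = MG.dist (List.replicate j false ++ sMap T hlf r x) (sMap T hlf r x) := by rw [← h2]
    _ ≤ j := h3
    _ ≤ D := h4
end

end QITree

open QITree

/-- Let `T₁` and `T₂` be locally finite trees of bounded degree in which every vertex has
degree at least 3. Then `T₁` and `T₂` are quasi-isometric with respect to their path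
metrics: there is a map `f` and constants `l ≥ 1`, `e, m ≥ 0` with
`(1/l)·d(x,y) − e ≤ d(f x, f y) ≤ l·d(x,y) + e` for all vertices `x, y`, whose image is
`m`-quasi-dense. -/
theorem stmt_18 {V₁ V₂ : Type*} (T₁ : SimpleGraph V₁) (T₂ : SimpleGraph V₂)
    (h₁ : T₁.IsTree) (h₂ : T₂.IsTree)
    (hlf₁ : ∀ v : V₁, (T₁.neighborSet v).Finite)
    (hlf₂ : ∀ v : V₂, (T₂.neighborSet v).Finite)
    (hbd₁ : ∃ D : ℕ, ∀ v : V₁, (T₁.neighborSet v).ncard ≤ D)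
    (hbd₂ : ∃ D : ℕ, ∀ v : V₂, (T₂.neighborSet v).ncard ≤ D)
    (hmin₁ : ∀ v : V₁, 3 ≤ (T₁.neighborSet v).ncard)
    (hmin₂ : ∀ v : V₂, 3 ≤ (T₂.neighborSet v).ncard) :
    ∃ (f : V₁ → V₂) (l e m : ℝ), 1 ≤ l ∧ 0 ≤ e ∧ 0 ≤ m ∧
      (∀ x y : V₁,
        (1 / l) * (T₁.dist x y : ℝ) - e ≤ (T₂.dist (f x) (f y) : ℝ) ∧
        (T₂.dist (f x) (f y) : ℝ) ≤ l * (T₁.dist x y : ℝ) + e) ∧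
      (∀ y : V₂, ∃ x : V₁, (T₂.dist y (f x) : ℝ) ≤ m) := by
  classical
  obtain ⟨r₁⟩ := h₁.1.nonempty
  obtain ⟨r₂⟩ := h₂.1.nonempty
  obtain ⟨D₁, hD₁⟩ := hbd₁
  obtain ⟨D₂, hD₂⟩ := hbd₂
  have hD₁3 : 3 ≤ D₁ := le_trans (hmin₁ r₁) (hD₁ r₁)
  have hD₂3 : 3 ≤ D₂ := le_trans (hmin₂ r₂) (hD₂ r₂)
  set s₁ := sMap T₁ hlf₁ r₁ with hs₁
  set s₂ := sMap T₂ hlf₂ r₂ with hs₂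
  set π₁ := piMap T₁ hlf₁ r₁ with hπ₁
  set π₂ := piMap T₂ hlf₂ r₂ with hπ₂
  set f : V₁ → V₂ := fun x => π₂ (s₁ x) with hf
  set L : ℝ := ((max D₁ D₂ : ℕ) : ℝ) with hL
  have hL3 : (3 : ℝ) ≤ L := by
    rw [hL]
    exact_mod_cast le_trans hD₁3 (le_max_left D₁ D₂)
  have hL0 : (0 : ℝ) < L := by linarith
  have hD₁L : ((D₁ : ℕ) : ℝ) ≤ L := by
    rw [hL]; exact_mod_cast le_max_left D₁ D₂
  have hD₂L : ((D₂ : ℕ) : ℝ) ≤ L := by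
    rw [hL]; exact_mod_cast le_max_right D₁ D₂
  refine ⟨f, L, 2, (D₁ : ℝ), by linarith, by norm_num, by positivity, ?_, ?_⟩
  · intro x y
    have key1 : T₂.dist (f x) (f y) ≤ D₁ * T₁.dist x y := by
      calc T₂.dist (f x) (f y) ≤ MG.dist (s₁ x) (s₁ y) :=
            pi_dist_le (hlf := hlf₂) (r := r₂) h₂ hmin₂ (s₁ x) (s₁ y)
        _ ≤ D₁ * T₁.dist x y := sMap_dist_le (hlf := hlf₁) (r := r₁) h₁ hmin₁ hD₁ x y
    have key2 : T₁.dist x y ≤ D₂ * T₂.dist (f x) (f y) + 2 * D₂ := by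
      have e1 : π₁ (s₁ x) = x := pi_sMap (hlf := hlf₁) (r := r₁) h₁ hmin₁ x
      have e2 : π₁ (s₁ y) = y := pi_sMap (hlf := hlf₁) (r := r₁) h₁ hmin₁ y
      have h3 : T₁.dist x y ≤ MG.dist (s₁ x) (s₁ y) := by
        conv_lhs => rw [← e1, ← e2]
        exact pi_dist_le (hlf := hlf₁) (r := r₁) h₁ hmin₁ (s₁ x) (s₁ y)
      have t1 := MG_connected.dist_triangle (u := s₁ x) (v := s₂ (f x)) (w := s₁ y)
      have t2 := MG_connected.dist_triangle (u := s₂ (f x)) (v := s₂ (f y)) (w := s₁ y)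
      have a1 : MG.dist (s₁ x) (s₂ (f x)) ≤ D₂ :=
        sMap_pi_close (hlf := hlf₂) (r := r₂) h₂ hmin₂ hD₂ (s₁ x)
      have a2 : MG.dist (s₂ (f x)) (s₂ (f y)) ≤ D₂ * T₂.dist (f x) (f y) :=
        sMap_dist_le (hlf := hlf₂) (r := r₂) h₂ hmin₂ hD₂ (f x) (f y)
      have a3 : MG.dist (s₂ (f y)) (s₁ y) ≤ D₂ := by
        rw [SimpleGraph.dist_comm]
        exact sMap_pi_close (hlf := hlf₂) (r := r₂) h₂ hmin₂ hD₂ (s₁ y)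
      omega
    have c1 : ((T₂.dist (f x) (f y) : ℕ) : ℝ) ≤ (D₁ : ℝ) * ((T₁.dist x y : ℕ) : ℝ) := by
      exact_mod_cast key1
    have c2 : ((T₁.dist x y : ℕ) : ℝ) ≤
        (D₂ : ℝ) * ((T₂.dist (f x) (f y) : ℕ) : ℝ) + 2 * (D₂ : ℝ) := by
      exact_mod_cast key2
    have hn1 : (0 : ℝ) ≤ ((T₁.dist x y : ℕ) : ℝ) := by positivity
    have hn2 : (0 : ℝ) ≤ ((T₂.dist (f x) (f y) : ℕ) : ℝ) := by positivity
    have hD₂0 : (0 : ℝ) < (D₂ : ℝ) := by exact_mod_cast (by omega : 0 < D₂)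
    constructor
    · have h6 : 1 / L * ((T₁.dist x y : ℕ) : ℝ) ≤ ((T₂.dist (f x) (f y) : ℕ) : ℝ) + 2 := by
        rw [div_mul_eq_mul_div, div_le_iff₀ hL0]
        nlinarith
      linarith
    · nlinarith
  · intro y
    refine ⟨π₁ (s₂ y), ?_⟩
    have e : π₂ (s₂ y) = y := pi_sMap (hlf := hlf₂) (r := r₂) h₂ hmin₂ y
    have key : T₂.dist y (f (π₁ (s₂ y))) ≤ D₁ := by
      calc T₂.dist y (f (π₁ (s₂ y)))
          = T₂.dist (π₂ (s₂ y)) (π₂ (s₁ (π₁ (s₂ y)))) := by rw [e]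
        _ ≤ MG.dist (s₂ y) (s₁ (π₁ (s₂ y))) :=
            pi_dist_le (hlf := hlf₂) (r := r₂) h₂ hmin₂ _ _
        _ ≤ D₁ := sMap_pi_close (hlf := hlf₁) (r := r₁) h₁ hmin₁ hD₁ (s₂ y)
    exact_mod_cast key
end
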